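/- arXiv:2208.14133 — 4 statements merged into one kernel-verified Lean document; each statement's English description precedes it below -/
import Mathlib

section
/- Let σ > 0, m ≥ 1, μ* ∈ ℝ, μ̂_PRE ∈ ℝ, and set d = μ̂_PRE − μ*. Let λ > 0 and β = λ/(λ+1). Let x₁,…,x_m be i.i.d. samples from the Gaussian N(μ*, σ²), let μ̂_MLE = (1/m)·Σᵢ xᵢ and μ̂_REG = (1/(1+λ))·μ̂_MLE + (λ/(1+λ))·μ̂_PRE. If max{(σ² − m·d²)/(σ² + m·d²), 0} < β < min{2σ²/(σ² + m·d²), 1}, then the mean squared error of μ̂_REG is strictly smaller than the minimum of the mean squared errors of μ̂_MLE and μ̂_PRE; that is, E[(μ̂_REG − μ*)²] < min{ E[(μ̂_MLE − μ*)²], (μ̂_PRE − μ*)² }, where the expectations are taken over the i.i.d. sample. -/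
open MeasureTheory ProbabilityTheory Real
open scoped NNReal ENNReal

namespace StmtAux

/-! ### Gaussian moment computations -/

lemma pdf0_eq (v : ℝ≥0) :
    gaussianPDFReal 0 v
      = fun t => (Real.sqrt (2 * π * v))⁻¹ * Real.exp (-((2 * (v : ℝ))⁻¹) * t ^ 2) := by
  funext t
  rw [gaussianPDFReal]
  congr 1
  rw [sub_zero]
  ring

lemma pdf_shift (μ : ℝ) (v : ℝ≥0) (x : ℝ) :
    gaussianPDFReal 0 v (x - μ) = gaussianPDFReal μ v x := by
  rw [gaussianPDFReal_sub, zero_add]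

lemma int_sq_exp {b : ℝ} (hb : 0 < b) :
    Integrable (fun x : ℝ => x ^ 2 * Real.exp (-b * x ^ 2)) := by
  have := integrable_rpow_mul_exp_neg_mul_sq hb (s := 2) (by norm_num)
  have h2 : ∀ x : ℝ, x ^ (2:ℝ) = x ^ (2:ℕ) := fun x => by
    rw [show (2:ℝ) = ((2:ℕ):ℝ) by norm_num, Real.rpow_natCast]
  simpa [h2] using this

lemma gauss_i1 (μ : ℝ) (v : ℝ≥0) (hv : v ≠ 0) :
    Integrable (fun x => gaussianPDFReal μ v x * (x - μ)) (volume : Measure ℝ) := by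
  have hvpos : (0:ℝ) < (v:ℝ) := NNReal.coe_pos.mpr (pos_iff_ne_zero.mpr hv)
  have hb : (0:ℝ) < (2 * (v:ℝ))⁻¹ := by positivity
  have h : Integrable (fun t : ℝ => gaussianPDFReal 0 v t * t) (volume : Measure ℝ) := by
    have h0 := ((integrable_mul_exp_neg_mul_sq hb).const_mul (Real.sqrt (2 * π * v))⁻¹)
    refine h0.congr (Filter.Eventually.of_forall fun t => ?_)
    rw [pdf0_eq]
    ring
  have := h.comp_sub_right μ
  refine this.congr (Filter.Eventually.of_forall fun x => ?_)
  simp [pdf_shift]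

lemma gauss_i2 (μ : ℝ) (v : ℝ≥0) (hv : v ≠ 0) :
    Integrable (fun x => gaussianPDFReal μ v x * (x - μ) ^ 2) (volume : Measure ℝ) := by
  have hvpos : (0:ℝ) < (v:ℝ) := NNReal.coe_pos.mpr (pos_iff_ne_zero.mpr hv)
  have hb : (0:ℝ) < (2 * (v:ℝ))⁻¹ := by positivity
  have h : Integrable (fun t : ℝ => gaussianPDFReal 0 v t * t ^ 2) (volume : Measure ℝ) := by
    have h0 := ((int_sq_exp hb).const_mul (Real.sqrt (2 * π * v))⁻¹)
    refine h0.congr (Filter.Eventually.of_forall fun t => ?_)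
    rw [pdf0_eq]
    ring
  have := h.comp_sub_right μ
  refine this.congr (Filter.Eventually.of_forall fun x => ?_)
  simp [pdf_shift]

lemma odd_int_zero {f : ℝ → ℝ} (hodd : ∀ t, f (-t) = - f t) :
    ∫ t, f t = 0 := by
  have A : MeasurePreserving (fun x : ℝ => -x) volume volume :=
    ⟨measurable_neg, Measure.map_neg_eq_self _⟩
  have B : ∫ t, f (-t) = ∫ t, f t :=
    A.integral_comp (Homeomorph.neg ℝ).measurableEmbedding f
  have C : ∫ t, f (-t) = - ∫ t, f t := by
    simp_rw [hodd]
    exact integral_neg f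
  linarith [B.symm.trans C]

lemma gauss_m1 (μ : ℝ) (v : ℝ≥0) :
    ∫ x, gaussianPDFReal μ v x * (x - μ) = 0 := by
  have h1 : ∫ x, gaussianPDFReal μ v x * (x - μ)
      = ∫ t, gaussianPDFReal 0 v t * t := by
    rw [← integral_sub_right_eq_self (fun t => gaussianPDFReal 0 v t * t) μ]
    congr 1
    funext x
    simp [pdf_shift]
  rw [h1]
  apply odd_int_zero
  intro t
  rw [pdf0_eq]
  simp only [neg_sq]
  ring

lemma sq_exp_int_pos {b : ℝ} (hb : 0 < b) :
    ∫ x in Set.Ioi (0:ℝ), x ^ 2 * Real.exp (-b * x ^ 2)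
      = b ^ (-(3:ℝ)/2) * (1/2) * Real.Gamma ((3:ℝ)/2) := by
  have h := integral_rpow_mul_exp_neg_mul_rpow (p := 2) (q := 2) (b := b)
    (by norm_num) (by norm_num) hb
  rw [show -((2:ℝ)+1)/2 = -(3:ℝ)/2 by norm_num, show ((2:ℝ)+1)/2 = (3:ℝ)/2 by norm_num] at h
  rw [← h]
  refine setIntegral_congr_fun measurableSet_Ioi fun x hx => ?_
  simp [Real.rpow_two]

lemma gamma_32 : Real.Gamma ((3:ℝ)/2) = Real.sqrt π / 2 := by
  have : ((3:ℝ)/2) = 1/2 + 1 := by norm_num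
  rw [this, Real.Gamma_add_one (by norm_num), Real.Gamma_one_half_eq]
  ring

lemma sq_exp_int {b : ℝ} (hb : 0 < b) :
    ∫ x : ℝ, x ^ 2 * Real.exp (-b * x ^ 2)
      = 2 * (b ^ (-(3:ℝ)/2) * (1/2) * (Real.sqrt π / 2)) := by
  have habs : (fun x : ℝ => x ^ 2 * Real.exp (-b * x ^ 2))
      = fun x : ℝ => |x| ^ 2 * Real.exp (-b * |x| ^ 2) := by
    funext x; rw [sq_abs]
  rw [habs, integral_comp_abs (f := fun x : ℝ => x ^ 2 * Real.exp (-b * x ^ 2)),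
    sq_exp_int_pos hb, gamma_32]

lemma gauss_m2 (μ : ℝ) (v : ℝ≥0) (hv : v ≠ 0) :
    ∫ x, gaussianPDFReal μ v x * (x - μ) ^ 2 = (v : ℝ) := by
  have hvpos : (0:ℝ) < (v:ℝ) := NNReal.coe_pos.mpr (pos_iff_ne_zero.mpr hv)
  set w : ℝ := 2 * (v:ℝ) with hw
  have hwpos : 0 < w := by positivity
  have hb : (0:ℝ) < w⁻¹ := by positivity
  have h1 : ∫ x, gaussianPDFReal μ v x * (x - μ) ^ 2
      = ∫ t, gaussianPDFReal 0 v t * t ^ 2 := by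
    rw [← integral_sub_right_eq_self (fun t => gaussianPDFReal 0 v t * t ^ 2) μ]
    congr 1
    funext x
    rw [gaussianPDFReal_sub, zero_add]
  have hpdf : gaussianPDFReal 0 v
      = fun t => (Real.sqrt (2 * π * v))⁻¹ * Real.exp (-(w⁻¹) * t ^ 2) := by
    funext t
    rw [gaussianPDFReal]
    congr 1
    rw [sub_zero, hw]
    ring
  rw [h1, hpdf]
  have h2 : ∫ t : ℝ, (Real.sqrt (2 * π * v))⁻¹ * Real.exp (-(w⁻¹) * t ^ 2) * t ^ 2
      = (Real.sqrt (2 * π * v))⁻¹ * ∫ t : ℝ, t ^ 2 * Real.exp (-(w⁻¹) * t ^ 2) := by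
    rw [← integral_const_mul]
    congr 1; funext t; ring
  rw [h2, sq_exp_int hb]
  have hrw : (w⁻¹ : ℝ) ^ (-(3:ℝ)/2) = w * Real.sqrt w := by
    rw [Real.inv_rpow hwpos.le, show (-3:ℝ)/2 = -(3/2) by norm_num,
      Real.rpow_neg hwpos.le, inv_inv,
      show (3:ℝ)/2 = 1 + 1/2 by norm_num, Real.rpow_add hwpos, Real.rpow_one,
      ← Real.sqrt_eq_rpow]
  rw [hrw]
  have hsq : Real.sqrt (2 * π * v) = Real.sqrt w * Real.sqrt π := by
    rw [show 2 * π * (v:ℝ) = w * π by rw [hw]; ring, Real.sqrt_mul hwpos.le]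
  rw [hsq]
  have hsw : Real.sqrt w > 0 := Real.sqrt_pos.mpr hwpos
  have hsp : Real.sqrt π > 0 := Real.sqrt_pos.mpr Real.pi_pos
  field_simp
  rw [hw]

/-! ### From `gaussianReal` to density integrals -/

lemma pdf_nn (μ : ℝ) (v : ℝ≥0) :
    gaussianPDF μ v = fun x => ((Real.toNNReal (gaussianPDFReal μ v x) : ℝ≥0) : ℝ≥0∞) := by
  funext x; rfl

lemma gaussianReal_integral (μ : ℝ) {v : ℝ≥0} (hv : v ≠ 0) (g : ℝ → ℝ) :
    ∫ x, g x ∂(gaussianReal μ v) = ∫ x, gaussianPDFReal μ v x * g x := by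
  rw [gaussianReal_of_var_ne_zero _ hv, pdf_nn,
    integral_withDensity_eq_integral_smul ((measurable_gaussianPDFReal μ v).real_toNNReal) g]
  congr 1
  funext x
  simp only [NNReal.smul_def, smul_eq_mul, Real.coe_toNNReal _ (gaussianPDFReal_nonneg μ v x)]

lemma gaussianReal_integrable (μ : ℝ) {v : ℝ≥0} (hv : v ≠ 0) {g : ℝ → ℝ}
    (h : Integrable (fun x => gaussianPDFReal μ v x * g x) (volume : Measure ℝ)) :
    Integrable g (gaussianReal μ v) := by
  rw [gaussianReal_of_var_ne_zero _ hv, pdf_nn,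
    integrable_withDensity_iff_integrable_smul ((measurable_gaussianPDFReal μ v).real_toNNReal)]
  refine h.congr (Filter.Eventually.of_forall fun x => ?_)
  simp only [NNReal.smul_def, smul_eq_mul, Real.coe_toNNReal _ (gaussianPDFReal_nonneg μ v x)]

/-! ### Product-measure lemmas -/

theorem pi_integral_prod {n : ℕ} (ν : Measure ℝ) [IsProbabilityMeasure ν]
    (f : Fin n → ℝ → ℝ) :
    ∫ x : Fin n → ℝ, ∏ i, f i (x i) ∂(Measure.pi fun _ => ν) = ∏ i, ∫ x, f i x ∂ν := by
  induction n with
  | zero => simp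
  | succ n ih =>
    calc
      ∫ x : Fin (n+1) → ℝ, ∏ i, f i (x i) ∂(Measure.pi fun _ => ν)
          = ∫ p : ℝ × (Fin n → ℝ), f 0 p.1 * ∏ i : Fin n, f i.succ (p.2 i)
            ∂(ν.prod (Measure.pi fun _ : Fin n => ν)) := by
        rw [← ((measurePreserving_piFinSuccAbove
          (fun _ : Fin (n+1) => ν) 0).symm).integral_comp']
        simp_rw [MeasurableEquiv.piFinSuccAbove_symm_apply, Fin.insertNthEquiv,
          Fin.prod_univ_succ, Fin.insertNth_zero]
        simp [Fin.zero_succAbove, Fin.cons_succ]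
      _ = (∫ x, f 0 x ∂ν) * ∏ i : Fin n, ∫ x, f i.succ x ∂ν := by
        rw [← ih fun i => f i.succ, ← integral_prod_mul]
      _ = ∏ i, ∫ x, f i x ∂ν := by rw [Fin.prod_univ_succ]

theorem pi_integrable_prod {n : ℕ} (ν : Measure ℝ) [IsProbabilityMeasure ν]
    {f : Fin n → ℝ → ℝ} (hf : ∀ i, Integrable (f i) ν) :
    Integrable (fun x : Fin n → ℝ => ∏ i, f i (x i)) (Measure.pi fun _ => ν) := by
  induction n with
  | zero => simp [integrable_const_iff]
  | succ n ih =>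
    have A := (measurePreserving_piFinSuccAbove (fun _ : Fin (n+1) => ν) 0).symm
    rw [← A.integrable_comp_emb (MeasurableEquiv.measurableEmbedding _)]
    simp_rw [Function.comp_def, MeasurableEquiv.piFinSuccAbove_symm_apply, Fin.insertNthEquiv,
      Fin.prod_univ_succ, Fin.insertNth_zero]
    simp only [Fin.zero_succAbove, Fin.cons_succ, Equiv.coe_fn_mk, Fin.cons_zero]
    exact Integrable.mul_prod (hf 0) (ih fun i => hf i.succ)

/-! ### Coordinate moments under the product measure -/

section Cross

variable {m : ℕ} (ν : Measure ℝ) [IsProbabilityMeasure ν] (μ V : ℝ)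

/-- coordinate functions for the cross moment -/
def g (μ : ℝ) (i j k : Fin m) : ℝ → ℝ :=
  fun t => (if k = i then t - μ else 1) * (if k = j then t - μ else 1)

variable (Hg1 : Integrable (fun t => t - μ) ν) (Hg2 : Integrable (fun t => (t - μ) ^ 2) ν)
  (E1 : ∫ t, (t - μ) ∂ν = 0) (E2 : ∫ t, (t - μ) ^ 2 ∂ν = V)

include Hg1 Hg2 in
lemma g_int (i j k : Fin m) : Integrable (g μ i j k) ν := by
  unfold g
  by_cases h1 : k = i <;> by_cases h2 : k = j
  · have hij : i = j := h1.symm.trans h2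
    simp only [h1, hij, if_pos rfl]
    exact Hg2.congr (Filter.Eventually.of_forall fun t => by simp [pow_two])
  · simp only [h1, if_pos rfl, h1 ▸ h2, if_neg, mul_one]
    simpa using Hg1
  · simp only [h2, if_pos rfl, h2 ▸ h1, if_neg, one_mul]
    simpa using Hg1
  · simp only [h1, h2, if_neg, mul_one]
    simpa using (integrable_const (1:ℝ) : Integrable (fun _ : ℝ => (1:ℝ)) ν)

lemma g_prod (i j : Fin m) (x : Fin m → ℝ) :
    ∏ k, g μ i j k (x k) = (x i - μ) * (x j - μ) := by
  unfold g
  rw [Finset.prod_mul_distrib, Finset.prod_ite_eq', Finset.prod_ite_eq']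
  simp

include Hg1 Hg2 in
lemma cross_integrable (i j : Fin m) :
    Integrable (fun x : Fin m → ℝ => (x i - μ) * (x j - μ)) (Measure.pi fun _ => ν) := by
  refine (pi_integrable_prod ν fun k => g_int ν μ Hg1 Hg2 i j k).congr
    (Filter.Eventually.of_forall fun x => ?_)
  exact g_prod μ i j x

include Hg1 Hg2 E1 E2 in
lemma cross_integral (i j : Fin m) :
    ∫ x : Fin m → ℝ, (x i - μ) * (x j - μ) ∂(Measure.pi fun _ => ν)
      = if i = j then V else 0 := by
  have h1 : ∫ x : Fin m → ℝ, (x i - μ) * (x j - μ) ∂(Measure.pi fun _ => ν)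
      = ∏ k, ∫ t, g μ i j k t ∂ν := by
    rw [← pi_integral_prod ν (g μ i j)]
    exact integral_congr_ae (Filter.Eventually.of_forall fun x => (g_prod μ i j x).symm)
  have hI : ∀ k, ∫ t, g μ i j k t ∂ν
      = if k = i then (if k = j then V else 0) else if k = j then 0 else 1 := by
    intro k
    unfold g
    by_cases hki : k = i <;> by_cases hkj : k = j
    · have hij : i = j := hki.symm.trans hkj
      simp only [hki, hij, if_pos rfl]
      rw [← E2]
      refine integral_congr_ae (Filter.Eventually.of_forall fun t => ?_)
      simp [pow_two]
    · simp only [hki, if_pos rfl, hki ▸ hkj, if_neg, mul_one]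
      simpa using E1
    · simp only [hkj, if_pos rfl, hkj ▸ hki, if_neg, one_mul]
      simpa using E1
    · simp only [hki, hkj, if_neg, mul_one]
      simp
  rw [h1]
  simp_rw [hI]
  by_cases hij : i = j
  · subst hij
    have : ∀ k : Fin m, (if k = i then (if k = i then V else 0) else if k = i then 0 else 1)
        = if k = i then V else 1 := by intro k; by_cases h : k = i <;> simp [h]
    simp_rw [this]
    rw [Finset.prod_ite_eq']
    simp
  · rw [if_neg hij]
    refine Finset.prod_eq_zero (Finset.mem_univ i) ?_
    simp [hij]

/-- single coordinate -/
def g1 (μ : ℝ) (i k : Fin m) : ℝ → ℝ := fun t => if k = i then t - μ else 1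

include Hg1 in
lemma coord_integrable (i : Fin m) :
    Integrable (fun x : Fin m → ℝ => x i - μ) (Measure.pi fun _ => ν) := by
  have hint : ∀ k, Integrable (g1 μ i k) ν := by
    intro k
    unfold g1
    by_cases h : k = i
    · simpa [h] using Hg1
    · simp only [h, if_neg]
      simpa using (integrable_const (1:ℝ) : Integrable (fun _ : ℝ => (1:ℝ)) ν)
  refine (pi_integrable_prod ν hint).congr (Filter.Eventually.of_forall fun x => ?_)
  show (∏ k, g1 μ i k (x k)) = x i - μ
  unfold g1
  rw [Finset.prod_ite_eq']
  simp

include Hg1 E1 in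
lemma coord_integral (i : Fin m) :
    ∫ x : Fin m → ℝ, (x i - μ) ∂(Measure.pi fun _ => ν) = 0 := by
  have h1 : ∫ x : Fin m → ℝ, (x i - μ) ∂(Measure.pi fun _ => ν)
      = ∏ k, ∫ t, g1 μ i k t ∂ν := by
    rw [← pi_integral_prod ν (g1 μ i)]
    refine integral_congr_ae (Filter.Eventually.of_forall fun x => ?_)
    show x i - μ = ∏ k, g1 μ i k (x k)
    unfold g1
    rw [Finset.prod_ite_eq']
    simp
  rw [h1]
  have hI : ∀ k, ∫ t, g1 μ i k t ∂ν = if k = i then (0:ℝ) else 1 := by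
    intro k
    unfold g1
    by_cases h : k = i
    · simpa [h] using E1
    · simp [h]
  simp_rw [hI]
  rw [Finset.prod_ite_eq']
  simp

end Cross

end StmtAux


lemma final_ineq (σ d mR β : ℝ) (hσ2 : 0 < σ^2) (hmpos : 0 < mR)
    (hb1 : 0 < β) (hb2 : β < 1)
    (hu : β*(σ^2 + mR*d^2) < 2*σ^2) (hl : σ^2 - mR*d^2 < β*(σ^2+mR*d^2)) :
    (1-β)^2 * σ^2 / mR + (β*d)^2 < min (σ^2/mR) (d^2) := by
  have hmne : mR ≠ 0 := ne_of_gt hmpos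
  rw [lt_min_iff]
  constructor
  · have key1 : β * (β*(σ^2 + mR*d^2)) < β * (2*σ^2) := mul_lt_mul_of_pos_left hu hb1
    rw [div_add' _ _ _ hmne, div_lt_div_iff₀ hmpos hmpos]
    nlinarith [mul_lt_mul_of_pos_right key1 hmpos]
  · have h1mβ : (0:ℝ) < 1 - β := by linarith
    have key2 : (1-β)*(σ^2 - mR*d^2) < (1-β)*(β*(σ^2+mR*d^2)) :=
      mul_lt_mul_of_pos_left hl h1mβ
    rw [div_add' _ _ _ hmne, div_lt_iff₀ hmpos]
    nlinarith [key2]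

open MeasureTheory ProbabilityTheory


/-- Proposition 1 (Gaussian-fitting example): with an i.i.d. sample
`x₁,…,x_m ∼ N(μ*, σ²)`, `μ̂_MLE` the sample mean and
`μ̂_REG = (1/(1+λ))·μ̂_MLE + (λ/(1+λ))·μ̂_PRE`, if the normalized weight
`β = λ/(λ+1)` satisfies
`max{(σ² − m·d²)/(σ² + m·d²), 0} < β < min{2σ²/(σ² + m·d²), 1}` with
`d = μ̂_PRE − μ*`, then
`MSE[μ̂_REG] < min{MSE[μ̂_MLE], MSE[μ̂_PRE]}`. -/
theorem stmt_0 (σ : ℝ) (hσ : 0 < σ) (m : ℕ) (hm : 1 ≤ m)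
    (μstar μPRE : ℝ) (d : ℝ) (hd : d = μPRE - μstar)
    (lam : ℝ) (hlam : 0 < lam) (β : ℝ) (hβ : β = lam / (lam + 1))
    (P : Measure (Fin m → ℝ))
    (hP : P = Measure.pi fun _ : Fin m => gaussianReal μstar ⟨σ ^ 2, sq_nonneg σ⟩)
    (μMLE μREG : (Fin m → ℝ) → ℝ)
    (hMLE : ∀ x : Fin m → ℝ, μMLE x = (1 / (m : ℝ)) * ∑ i : Fin m, x i)
    (hREG : ∀ x : Fin m → ℝ,
      μREG x = (1 / (1 + lam)) * μMLE x + (lam / (1 + lam)) * μPRE)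
    (hlow : max ((σ ^ 2 - m * d ^ 2) / (σ ^ 2 + m * d ^ 2)) 0 < β)
    (hhigh : β < min (2 * σ ^ 2 / (σ ^ 2 + m * d ^ 2)) 1) :
    ∫ x, (μREG x - μstar) ^ 2 ∂P
      < min (∫ x, (μMLE x - μstar) ^ 2 ∂P) ((μPRE - μstar) ^ 2) := by
    classical
  set v : ℝ≥0 := (⟨σ ^ 2, sq_nonneg σ⟩ : ℝ≥0) with hvdef
  have hσ2 : (0:ℝ) < σ ^ 2 := by positivity
  have hv : v ≠ 0 := by
    intro h0
    have h1 : (v : ℝ) = 0 := by rw [h0]; simp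
    have h2 : (v : ℝ) = σ ^ 2 := rfl
    linarith [h2 ▸ h1]
  set ν : Measure ℝ := gaussianReal μstar v with hνdef
  haveI hprob : IsProbabilityMeasure ν := by rw [hνdef]; infer_instance
  have hPν : P = Measure.pi fun _ : Fin m => ν := hP
  have hmpos : (0:ℝ) < (m:ℝ) := by
    have : (1:ℝ) ≤ (m:ℝ) := by exact_mod_cast hm
    linarith
  have hmne : (m:ℝ) ≠ 0 := ne_of_gt hmpos
  -- one-dimensional moments
  have Hg1 : Integrable (fun t => t - μstar) ν := by
    rw [hνdef]
    exact StmtAux.gaussianReal_integrable μstar hv (StmtAux.gauss_i1 μstar v hv)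
  have Hg2 : Integrable (fun t => (t - μstar) ^ 2) ν := by
    rw [hνdef]
    exact StmtAux.gaussianReal_integrable μstar hv (StmtAux.gauss_i2 μstar v hv)
  have E1 : ∫ t, (t - μstar) ∂ν = 0 := by
    rw [hνdef, StmtAux.gaussianReal_integral μstar hv]
    exact StmtAux.gauss_m1 μstar v
  have E2 : ∫ t, (t - μstar) ^ 2 ∂ν = σ ^ 2 := by
    rw [hνdef, StmtAux.gaussianReal_integral μstar hv]
    exact StmtAux.gauss_m2 μstar v hv
  -- moments under the product measure
  have Pint2 : ∀ i j : Fin m,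
      Integrable (fun x : Fin m → ℝ => (x i - μstar) * (x j - μstar)) P := by
    intro i j; rw [hPν]; exact StmtAux.cross_integrable ν μstar Hg1 Hg2 i j
  have Pval2 : ∀ i j : Fin m,
      ∫ x, (x i - μstar) * (x j - μstar) ∂P = if i = j then σ ^ 2 else 0 := by
    intro i j; rw [hPν]; exact StmtAux.cross_integral ν μstar (σ ^ 2) Hg1 Hg2 E1 E2 i j
  have Pint1 : ∀ i : Fin m, Integrable (fun x : Fin m → ℝ => x i - μstar) P := by
    intro i; rw [hPν]; exact StmtAux.coord_integrable ν μstar Hg1 i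
  have Pval1 : ∀ i : Fin m, ∫ x, (x i - μstar) ∂P = 0 := by
    intro i; rw [hPν]; exact StmtAux.coord_integral ν μstar Hg1 E1 i
  haveI hPprob : IsProbabilityMeasure P := by rw [hPν]; infer_instance
  -- the centered sum
  set S : (Fin m → ℝ) → ℝ := fun x => ∑ i, (x i - μstar) with hSdef
  have hSint : Integrable S P := by
    rw [hSdef]
    exact integrable_finset_sum _ fun i _ => Pint1 i
  have hSval : ∫ x, S x ∂P = 0 := by
    rw [hSdef, integral_finset_sum _ fun i _ => Pint1 i]
    simp [Pval1]
  have hS2eq : ∀ x, S x ^ 2 = ∑ i, ∑ j, (x i - μstar) * (x j - μstar) := by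
    intro x
    rw [hSdef, pow_two, Finset.sum_mul_sum]
  have hS2int : Integrable (fun x => S x ^ 2) P := by
    have h := integrable_finset_sum (μ := P)
      (f := fun (i : Fin m) (x : Fin m → ℝ) => ∑ j, (x i - μstar) * (x j - μstar))
      Finset.univ (fun i _ => integrable_finset_sum _ fun j _ => Pint2 i j)
    refine h.congr (Filter.Eventually.of_forall fun x => ?_)
    show (∑ i, ∑ j, (x i - μstar) * (x j - μstar)) = S x ^ 2
    exact (hS2eq x).symm
  have hS2val : ∫ x, S x ^ 2 ∂P = m * σ ^ 2 := by
    have h0 : ∫ x, S x ^ 2 ∂P = ∫ x, ∑ i, ∑ j, (x i - μstar) * (x j - μstar) ∂P :=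
      integral_congr_ae (Filter.Eventually.of_forall fun x => hS2eq x)
    rw [h0, integral_finset_sum _ fun i _ => integrable_finset_sum _ fun j _ => Pint2 i j]
    have hrow : ∀ i ∈ Finset.univ, (∫ x, ∑ j, (x i - μstar) * (x j - μstar) ∂P) = σ ^ 2 := by
      intro i _
      rw [integral_finset_sum _ fun j _ => Pint2 i j]
      simp_rw [Pval2 i]
      rw [Finset.sum_ite_eq]
      simp
    rw [Finset.sum_congr rfl hrow, Finset.sum_const, Finset.card_univ, Fintype.card_fin,
      nsmul_eq_mul]
  -- expressing the estimators via S
  have hMLEc : ∀ x, μMLE x - μstar = (1/(m:ℝ)) * S x := by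
    intro x
    have hs : S x = (∑ i, x i) - m * μstar := by
      show (∑ i, (x i - μstar)) = (∑ i, x i) - m * μstar
      rw [Finset.sum_sub_distrib, Finset.sum_const, Finset.card_univ, Fintype.card_fin,
        nsmul_eq_mul]
    rw [hMLE, hs]
    field_simp
  have hne1 : (1:ℝ) + lam ≠ 0 := by linarith
  have hne2 : lam + (1:ℝ) ≠ 0 := by linarith
  have hREGc : ∀ x, μREG x - μstar = (1 - β) * (μMLE x - μstar) + β * d := by
    intro x
    rw [hREG, hβ, hd]
    field_simp
    ring
  set c1 : ℝ := (1 - β) * (1/(m:ℝ)) with hc1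
  set c2 : ℝ := β * d with hc2
  have hREGS : ∀ x, μREG x - μstar = c1 * S x + c2 := by
    intro x; rw [hREGc x, hMLEc x, hc1, hc2]; ring
  -- compute the mean squared errors
  have hIREG : ∫ x, (μREG x - μstar) ^ 2 ∂P = c1^2 * (m * σ^2) + c2^2 := by
    have h0 : ∀ x, (μREG x - μstar)^2
        = c1^2 * S x ^ 2 + ((2*c1*c2) * S x + c2^2) := by
      intro x; rw [hREGS x]; ring
    calc ∫ x, (μREG x - μstar)^2 ∂P
        = ∫ x, (c1^2 * S x ^ 2 + ((2*c1*c2) * S x + c2^2)) ∂P :=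
          integral_congr_ae (Filter.Eventually.of_forall fun x => h0 x)
      _ = (∫ x, c1^2 * S x^2 ∂P) + ∫ x, ((2*c1*c2) * S x + c2^2) ∂P :=
          integral_add (hS2int.const_mul _) ((hSint.const_mul _).add (integrable_const _))
      _ = c1^2 * (m*σ^2) + c2^2 := by
          rw [integral_add (hSint.const_mul _) (integrable_const _),
            integral_const_mul, integral_const_mul, hS2val, hSval]
          simp
  have hIMLE : ∫ x, (μMLE x - μstar)^2 ∂P = σ^2 / m := by
    have h0 : ∀ x, (μMLE x - μstar)^2 = (1/(m:ℝ))^2 * S x^2 := by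
      intro x; rw [hMLEc x]; ring
    calc ∫ x, (μMLE x - μstar)^2 ∂P = ∫ x, (1/(m:ℝ))^2 * S x^2 ∂P :=
          integral_congr_ae (Filter.Eventually.of_forall fun x => h0 x)
      _ = (1/(m:ℝ))^2 * (m * σ^2) := by rw [integral_const_mul, hS2val]
      _ = σ^2 / m := by field_simp
  rw [hIREG, hIMLE, ← hd]
  have hc1v : c1^2 * (m*σ^2) = (1-β)^2 * σ^2 / m := by rw [hc1]; field_simp
  rw [hc1v, hc2]
  have hden : (0:ℝ) < σ^2 + m*d^2 := by positivity
  have hb1 : 0 < β := lt_of_le_of_lt (le_max_right _ _) hlow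
  have hb2 : β < 1 := lt_of_lt_of_le hhigh (min_le_right _ _)
  have hu : β * (σ^2 + m*d^2) < 2*σ^2 := by
    have h := lt_of_lt_of_le hhigh (min_le_left _ _)
    exact (lt_div_iff₀ hden).mp h
  have hl : σ^2 - m*d^2 < β * (σ^2 + m*d^2) := by
    have h := lt_of_le_of_lt (le_max_left _ _) hlow
    exact (div_lt_iff₀ hden).mp h
  exact final_ineq σ d m β hσ2 hmpos hb1 hb2 hu hl
end

section
/- Let σ > 0, m ≥ 1, μ* ∈ ℝ, μ̂_PRE ∈ ℝ, d = μ̂_PRE − μ*, λ > 0, and β = λ/(λ+1). Let x₁,…,x_m be i.i.d. from N(μ*, σ²), μ̂_MLE = (1/m)·Σᵢ xᵢ, and μ̂_REG = (1/(1+λ))·μ̂_MLE + (λ/(1+λ))·μ̂_PRE. Define the expected risk R(μ̂) = E_{x∼N(μ*,σ²)}[−log φ_{μ̂,σ²}(x)], where φ_{a,σ²} is the density of N(a, σ²). If max{(σ² − m·d²)/(σ² + m·d²), 0} < β < min{2σ²/(σ² + m·d²), 1}, then E_S[R(μ̂_REG)] < min{ E_S[R(μ̂_MLE)], E_S[R(μ̂_PRE)]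 }, where E_S is expectation over the i.i.d. sample. -/
open MeasureTheory ProbabilityTheory

open Real

namespace Stmt9Aux

variable {σ : ℝ}

lemma expform (hσ : 0 < σ) : ∀ y : ℝ, rexp (-y ^ 2 / (2 * σ ^ 2))
    = rexp (-(2 * σ ^ 2)⁻¹ * y ^ 2) := by
  intro y; congr 1; field_simp

lemma A0 (hσ : 0 < σ) : Integrable (fun y : ℝ => rexp (-y ^ 2 / (2 * σ ^ 2))) := by
  simp only [expform hσ]; exact integrable_exp_neg_mul_sq (by positivity)

lemma A1 (hσ : 0 < σ) : Integrable (fun y : ℝ => y * rexp (-y ^ 2 / (2 * σ ^ 2))) := by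
  simp only [expform hσ]; exact integrable_mul_exp_neg_mul_sq (by positivity)

lemma A2 (hσ : 0 < σ) : Integrable (fun y : ℝ => y ^ 2 * rexp (-y ^ 2 / (2 * σ ^ 2))) := by
  simp only [expform hσ]
  have := integrable_rpow_mul_exp_neg_mul_sq (b := (2 * σ ^ 2)⁻¹) (by positivity)
    (s := 2) (by norm_num)
  convert this using 2 with y
  rw [show ((2:ℝ) : ℝ) = ((2:ℕ) : ℝ) by norm_num, Real.rpow_natCast]

lemma E0 (hσ : 0 < σ) : ∫ y : ℝ, rexp (-y ^ 2 / (2 * σ ^ 2)) = √(2 * π * σ ^ 2) := by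
  simp only [expform hσ]
  rw [integral_gaussian]
  congr 1
  field_simp

lemma deriv_inner (hσ : 0 < σ) (y : ℝ) :
    HasDerivAt (fun y : ℝ => -y ^ 2 / (2 * σ ^ 2)) (-y / σ ^ 2) y := by
  have h := ((hasDerivAt_pow 2 y).neg).div_const (2 * σ ^ 2)
  refine h.congr_deriv ?_
  field_simp
  ring

lemma E1 (hσ : 0 < σ) : ∫ y : ℝ, y * rexp (-y ^ 2 / (2 * σ ^ 2)) = 0 := by
  have hσ2 : (σ:ℝ) ^ 2 ≠ 0 := by positivity
  refine integral_eq_zero_of_hasDerivAt_of_integrable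
    (f := fun y => -σ ^ 2 * rexp (-y ^ 2 / (2 * σ ^ 2))) (fun y => ?_) (A1 hσ)
    (((A0 hσ).const_mul _))
  have h := ((deriv_inner hσ y).exp).const_mul (-σ ^ 2)
  refine h.congr_deriv ?_
  field_simp

lemma E2 (hσ : 0 < σ) : ∫ y : ℝ, y ^ 2 * rexp (-y ^ 2 / (2 * σ ^ 2))
    = σ ^ 2 * √(2 * π * σ ^ 2) := by
  have hσ2 : (σ:ℝ) ^ 2 ≠ 0 := by positivity
  have hint : Integrable (fun y : ℝ =>
      -σ ^ 2 * rexp (-y ^ 2 / (2 * σ ^ 2)) + y ^ 2 * rexp (-y ^ 2 / (2 * σ ^ 2))) :=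
    ((A0 hσ).const_mul _).add (A2 hσ)
  have hzero : ∫ y : ℝ, (-σ ^ 2 * rexp (-y ^ 2 / (2 * σ ^ 2))
      + y ^ 2 * rexp (-y ^ 2 / (2 * σ ^ 2))) = 0 := by
    refine integral_eq_zero_of_hasDerivAt_of_integrable
      (f := fun y => -σ ^ 2 * (y * rexp (-y ^ 2 / (2 * σ ^ 2)))) (fun y => ?_) hint
      ((A1 hσ).const_mul _)
    have h := ((hasDerivAt_id y).mul ((deriv_inner hσ y).exp)).const_mul (-σ ^ 2)
    refine h.congr_deriv ?_
    field_simp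
    simp only [id_eq]
    ring
  rw [integral_add ((A0 hσ).const_mul _) (A2 hσ), integral_const_mul, E0 hσ] at hzero
  linarith


section Gauss

variable {σ : ℝ} (μ : ℝ)

/-- Transfer of integrals from `gaussianReal` to Lebesgue. -/
lemma integral_gaussianReal_eq (hσ : 0 < σ) (f : ℝ → ℝ) :
    ∫ x, f x ∂gaussianReal μ ⟨σ ^ 2, sq_nonneg σ⟩
      = ∫ x, gaussianPDFReal μ ⟨σ ^ 2, sq_nonneg σ⟩ x * f x := by
  have hv : (⟨σ ^ 2, sq_nonneg σ⟩ : NNReal) ≠ 0 := by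
    simp [← NNReal.coe_eq_zero]
    positivity
  rw [gaussianReal_of_var_ne_zero _ hv]
  have hmeas : Measurable fun x => Real.toNNReal (gaussianPDFReal μ ⟨σ ^ 2, sq_nonneg σ⟩ x) :=
    (measurable_gaussianPDFReal _ _).real_toNNReal
  rw [show gaussianPDF μ ⟨σ ^ 2, sq_nonneg σ⟩
      = fun x => ((Real.toNNReal (gaussianPDFReal μ ⟨σ ^ 2, sq_nonneg σ⟩ x) : NNReal) : ENNReal)
      from rfl]
  rw [integral_withDensity_eq_integral_smul hmeas f]
  congr 1
  funext x
  rw [NNReal.smul_def, smul_eq_mul, Real.coe_toNNReal _ (gaussianPDFReal_nonneg μ ⟨σ ^ 2, sq_nonneg σ⟩ x)]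

lemma integrable_gaussianReal_iff (hσ : 0 < σ) (f : ℝ → ℝ) :
    Integrable f (gaussianReal μ ⟨σ ^ 2, sq_nonneg σ⟩)
      ↔ Integrable (fun x => gaussianPDFReal μ ⟨σ ^ 2, sq_nonneg σ⟩ x * f x) := by
  have hv : (⟨σ ^ 2, sq_nonneg σ⟩ : NNReal) ≠ 0 := by
    simp [← NNReal.coe_eq_zero]
    positivity
  rw [gaussianReal_of_var_ne_zero _ hv]
  have hmeas : Measurable fun x => Real.toNNReal (gaussianPDFReal μ ⟨σ ^ 2, sq_nonneg σ⟩ x) :=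
    (measurable_gaussianPDFReal _ _).real_toNNReal
  rw [show gaussianPDF μ ⟨σ ^ 2, sq_nonneg σ⟩
      = fun x => ((Real.toNNReal (gaussianPDFReal μ ⟨σ ^ 2, sq_nonneg σ⟩ x) : NNReal) : ENNReal)
      from rfl]
  rw [integrable_withDensity_iff_integrable_smul hmeas]
  constructor <;> intro h <;> refine h.congr (Filter.Eventually.of_forall fun x => ?_) <;>
    · simp only [NNReal.smul_def, smul_eq_mul]
      rw [Real.coe_toNNReal _ (gaussianPDFReal_nonneg μ ⟨σ ^ 2, sq_nonneg σ⟩ x)]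

lemma gaussianPDFReal_eq (hσ : 0 < σ) (x : ℝ) :
    gaussianPDFReal μ ⟨σ ^ 2, sq_nonneg σ⟩ x
      = (√(2 * π * σ ^ 2))⁻¹ * rexp (-(x - μ) ^ 2 / (2 * σ ^ 2)) := rfl

lemma gauss_m1_int (hσ : 0 < σ) :
    Integrable (fun x => x - μ) (gaussianReal μ ⟨σ ^ 2, sq_nonneg σ⟩) := by
  rw [integrable_gaussianReal_iff μ hσ]
  have h := (((A1 hσ).const_mul ((√(2 * π * σ ^ 2))⁻¹)).comp_sub_right μ)
  refine h.congr (Filter.Eventually.of_forall fun x => ?_)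
  simp only [gaussianPDFReal_eq μ hσ]
  ring

lemma gauss_m2_int (hσ : 0 < σ) :
    Integrable (fun x => (x - μ) ^ 2) (gaussianReal μ ⟨σ ^ 2, sq_nonneg σ⟩) := by
  rw [integrable_gaussianReal_iff μ hσ]
  have h := (((A2 hσ).const_mul ((√(2 * π * σ ^ 2))⁻¹)).comp_sub_right μ)
  refine h.congr (Filter.Eventually.of_forall fun x => ?_)
  simp only [gaussianPDFReal_eq μ hσ]
  ring

lemma gauss_m1 (hσ : 0 < σ) :
    ∫ x, (x - μ) ∂gaussianReal μ ⟨σ ^ 2, sq_nonneg σ⟩ = 0 := by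
  rw [integral_gaussianReal_eq μ hσ]
  have h : ∀ x : ℝ, gaussianPDFReal μ ⟨σ ^ 2, sq_nonneg σ⟩ x * (x - μ)
      = (√(2 * π * σ ^ 2))⁻¹ * ((fun y => y * rexp (-y ^ 2 / (2 * σ ^ 2))) (x - μ)) := by
    intro x; rw [gaussianPDFReal_eq μ hσ]; ring
  simp only [h]
  rw [integral_const_mul, integral_sub_right_eq_self
    (fun y => y * rexp (-y ^ 2 / (2 * σ ^ 2))) μ, E1 hσ, mul_zero]

lemma gauss_m2 (hσ : 0 < σ) :
    ∫ x, (x - μ) ^ 2 ∂gaussianReal μ ⟨σ ^ 2, sq_nonneg σ⟩ = σ ^ 2 := by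
  rw [integral_gaussianReal_eq μ hσ]
  have h : ∀ x : ℝ, gaussianPDFReal μ ⟨σ ^ 2, sq_nonneg σ⟩ x * (x - μ) ^ 2
      = (√(2 * π * σ ^ 2))⁻¹ * ((fun y => y ^ 2 * rexp (-y ^ 2 / (2 * σ ^ 2))) (x - μ)) := by
    intro x; rw [gaussianPDFReal_eq μ hσ]; ring
  simp only [h]
  rw [integral_const_mul, integral_sub_right_eq_self
    (fun y => y ^ 2 * rexp (-y ^ 2 / (2 * σ ^ 2))) μ, E2 hσ]
  rw [← mul_assoc, mul_comm _ (σ ^ 2), mul_assoc, inv_mul_cancel₀, mul_one]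
  positivity

end Gauss

section Pi

variable {m : ℕ} (μ : Measure ℝ) [IsProbabilityMeasure μ]

lemma pi_eval (g : ℝ → ℝ) (hg : Integrable g μ) (i : Fin m) :
    Integrable (fun x : Fin m → ℝ => g (x i)) (Measure.pi fun _ => μ) ∧
      ∫ x : Fin m → ℝ, g (x i) ∂Measure.pi (fun _ => μ) = ∫ y, g y ∂μ := by
  letI : MeasureSpace ℝ := ⟨μ⟩
  haveI : IsProbabilityMeasure (volume : Measure ℝ) := ‹IsProbabilityMeasure μ›
  set F : Fin m → ℝ → ℝ := Function.update (fun _ => fun _ => (1:ℝ)) i g with hF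
  have hFk : ∀ k, Integrable (F k) volume := by
    intro k
    rcases eq_or_ne k i with rfl | h
    · simp [hF]; exact hg
    · simp only [hF, Function.update_of_ne h]
      exact integrable_const (1:ℝ)
  have hprod : ∀ x : Fin m → ℝ, (∏ k, F k (x k)) = g (x i) := by
    intro x
    have h1 : (fun k => F k (x k)) = Function.update (fun _ : Fin m => (1:ℝ)) i (g (x i)) := by
      funext k
      rcases eq_or_ne k i with rfl | h
      · simp [hF]
      · simp [hF, Function.update_of_ne h]
    rw [h1, Finset.prod_update_of_mem (Finset.mem_univ i)]
    simp
  constructor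
  · refine (Integrable.fintype_prod_dep (f := F) hFk).congr
      (Filter.Eventually.of_forall fun x => hprod x)
  · have h2 : ∫ x : Fin m → ℝ, g (x i) ∂Measure.pi (fun _ => μ)
        = ∫ x : Fin m → ℝ, ∏ k, F k (x k) := by
      congr 1
      funext x
      rw [hprod]
    rw [h2, MeasureTheory.volume_pi, MeasureTheory.integral_fintype_prod_eq_prod F]
    have hIg : ∫ x, g x = ∫ y, g y ∂μ := rfl
    have h3 : (fun k => ∫ x, F k x) = Function.update (fun _ : Fin m => (1:ℝ)) i (∫ y, g y ∂μ) := by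
      funext k
      rcases eq_or_ne k i with rfl | h
      · simp only [hF, Function.update_self]
        exact hIg
      · simp [hF, Function.update_of_ne h]
    rw [h3, Finset.prod_update_of_mem (Finset.mem_univ i)]
    simp

lemma pi_pair (g : ℝ → ℝ) (hg : Integrable g μ) {i j : Fin m} (hij : i ≠ j) :
    Integrable (fun x : Fin m → ℝ => g (x i) * g (x j)) (Measure.pi fun _ => μ) ∧
      ∫ x : Fin m → ℝ, g (x i) * g (x j) ∂Measure.pi (fun _ => μ)
        = (∫ y, g y ∂μ) * ∫ y, g y ∂μ := by
  letI : MeasureSpace ℝ := ⟨μ⟩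
  haveI : IsProbabilityMeasure (volume : Measure ℝ) := ‹IsProbabilityMeasure μ›
  set F : Fin m → ℝ → ℝ :=
    Function.update (Function.update (fun _ => fun _ => (1:ℝ)) i g) j g with hF
  have hFk : ∀ k, Integrable (F k) volume := by
    intro k
    rcases eq_or_ne k j with rfl | hj
    · simp [hF]; exact hg
    rcases eq_or_ne k i with rfl | hi
    · simp [hF, Function.update_of_ne hj]; exact hg
    · simp only [hF, Function.update_of_ne hj, Function.update_of_ne hi]
      exact integrable_const (1:ℝ)
  have hprod : ∀ x : Fin m → ℝ, (∏ k, F k (x k)) = g (x i) * g (x j) := by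
    intro x
    have h1 : (fun k => F k (x k)) = Function.update
        (Function.update (fun _ : Fin m => (1:ℝ)) i (g (x i))) j (g (x j)) := by
      funext k
      rcases eq_or_ne k j with rfl | hj
      · simp [hF]
      rcases eq_or_ne k i with rfl | hi
      · simp [hF, Function.update_of_ne hj]
      · simp [hF, Function.update_of_ne hj, Function.update_of_ne hi]
    rw [h1, Finset.prod_update_of_mem (Finset.mem_univ j),
      Finset.prod_update_of_mem (by simp [hij] : i ∈ Finset.univ \ {j})]
    simp [hij, hij.symm, mul_comm]
  constructor
  · refine (Integrable.fintype_prod_dep (f := F) hFk).congr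
      (Filter.Eventually.of_forall fun x => hprod x)
  · have h2 : ∫ x : Fin m → ℝ, g (x i) * g (x j) ∂Measure.pi (fun _ => μ)
        = ∫ x : Fin m → ℝ, ∏ k, F k (x k) := by
      congr 1
      funext x
      rw [hprod]
    rw [h2, MeasureTheory.volume_pi, MeasureTheory.integral_fintype_prod_eq_prod F]
    have hIg : ∫ x, g x = ∫ y, g y ∂μ := rfl
    have h3 : (fun k => ∫ x, F k x) = Function.update
        (Function.update (fun _ : Fin m => (1:ℝ)) i (∫ y, g y ∂μ)) j (∫ y, g y ∂μ) := by
      funext k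
      rcases eq_or_ne k j with rfl | hj
      · simp only [hF, Function.update_self]
        exact hIg
      rcases eq_or_ne k i with rfl | hi
      · simp only [hF, Function.update_of_ne hj, Function.update_self]
        exact hIg
      · simp [hF, Function.update_of_ne hj, Function.update_of_ne hi]
    rw [h3, Finset.prod_update_of_mem (Finset.mem_univ j),
      Finset.prod_update_of_mem (by simp [hij] : i ∈ Finset.univ \ {j})]
    simp [hij, hij.symm, mul_comm]

lemma pi_sum_moments (g : ℝ → ℝ) (hg1 : Integrable g μ)
    (hg2 : Integrable (fun y => g y ^ 2) μ) (hz : ∫ y, g y ∂μ = 0) :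
    Integrable (fun x : Fin m → ℝ => ∑ i, g (x i)) (Measure.pi fun _ => μ) ∧
    Integrable (fun x : Fin m → ℝ => (∑ i, g (x i)) ^ 2) (Measure.pi fun _ => μ) ∧
    (∫ x : Fin m → ℝ, (∑ i, g (x i)) ∂Measure.pi (fun _ => μ) = 0) ∧
    (∫ x : Fin m → ℝ, (∑ i, g (x i)) ^ 2 ∂Measure.pi (fun _ => μ)
      = m * ∫ y, g y ^ 2 ∂μ) := by
  have hterm : ∀ i j : Fin m,
      Integrable (fun x : Fin m → ℝ => g (x i) * g (x j)) (Measure.pi fun _ => μ) := by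
    intro i j
    rcases eq_or_ne i j with rfl | h
    · refine ((pi_eval μ (fun y => g y ^ 2) hg2 i).1).congr
        (Filter.Eventually.of_forall fun x => ?_)
      simp [pow_two]
    · exact (pi_pair μ g hg1 h).1
  have htermval : ∀ i j : Fin m,
      ∫ x : Fin m → ℝ, g (x i) * g (x j) ∂Measure.pi (fun _ => μ)
        = if i = j then ∫ y, g y ^ 2 ∂μ else 0 := by
    intro i j
    rcases eq_or_ne i j with rfl | h
    · simp only [if_pos rfl]
      rw [← (pi_eval μ (fun y => g y ^ 2) hg2 i).2]
      congr 1
      funext x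
      simp [pow_two]
    · rw [if_neg h, (pi_pair μ g hg1 h).2, hz, mul_zero]
  have hsq : (fun x : Fin m → ℝ => (∑ i, g (x i)) ^ 2)
      = fun x => ∑ i, ∑ j, g (x i) * g (x j) := by
    funext x
    rw [pow_two, Finset.sum_mul_sum]
  refine ⟨integrable_finset_sum _ fun i _ => (pi_eval μ g hg1 i).1, ?_, ?_, ?_⟩
  · rw [hsq]
    exact integrable_finset_sum _ fun i _ =>
      integrable_finset_sum _ fun j _ => hterm i j
  · rw [integral_finset_sum _ fun i _ => (pi_eval μ g hg1 i).1]
    simp [fun i : Fin m => (pi_eval μ g hg1 i).2, hz]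
  · rw [hsq, integral_finset_sum _ fun i _ =>
      integrable_finset_sum _ fun j _ => hterm i j]
    have : ∀ i : Fin m, ∫ x : Fin m → ℝ, (∑ j, g (x i) * g (x j)) ∂Measure.pi (fun _ => μ)
        = ∫ y, g y ^ 2 ∂μ := by
      intro i
      rw [integral_finset_sum _ fun j _ => hterm i j]
      simp [htermval i]
    simp [this, Finset.sum_const]

end Pi

end Stmt9Aux


set_option maxHeartbeats 1000000 in
/-- Corollary (expected risk version of Proposition 1): in the Gaussian-fitting
example, with expected risk `R(a) = E_{x∼N(μ*,σ²)}[−log φ_{a,σ²}(x)]`, if the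
normalized weight `β = λ/(λ+1)` lies in the admissible interval, then
`E_S[R(μ̂_REG)] < min{E_S[R(μ̂_MLE)], E_S[R(μ̂_PRE)]}`. -/
theorem stmt_9 (σ : ℝ) (hσ : 0 < σ) (m : ℕ) (hm : 1 ≤ m)
    (μstar μPRE : ℝ) (d : ℝ) (hd : d = μPRE - μstar)
    (lam : ℝ) (hlam : 0 < lam) (β : ℝ) (hβ : β = lam / (lam + 1))
    (P : Measure (Fin m → ℝ))
    (hP : P = Measure.pi fun _ : Fin m => gaussianReal μstar ⟨σ ^ 2, sq_nonneg σ⟩)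
    (μMLE μREG : (Fin m → ℝ) → ℝ)
    (hMLE : ∀ x : Fin m → ℝ, μMLE x = (1 / (m : ℝ)) * ∑ i : Fin m, x i)
    (hREG : ∀ x : Fin m → ℝ,
      μREG x = (1 / (1 + lam)) * μMLE x + (lam / (1 + lam)) * μPRE)
    (R : ℝ → ℝ)
    (hR : ∀ a : ℝ, R a =
      ∫ x, -Real.log (gaussianPDFReal a ⟨σ ^ 2, sq_nonneg σ⟩ x)
        ∂(gaussianReal μstar ⟨σ ^ 2, sq_nonneg σ⟩))
    (hlow : max ((σ ^ 2 - m * d ^ 2) / (σ ^ 2 + m * d ^ 2)) 0 < β)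
    (hhigh : β < min (2 * σ ^ 2 / (σ ^ 2 + m * d ^ 2)) 1) :
    ∫ s, R (μREG s) ∂P < min (∫ s, R (μMLE s) ∂P) (R μPRE) := by
  have hσ2 : (0:ℝ) < σ ^ 2 := by positivity
  have hσ2' : (σ:ℝ) ^ 2 ≠ 0 := ne_of_gt hσ2
  haveI : IsProbabilityMeasure (gaussianReal μstar ⟨σ ^ 2, sq_nonneg σ⟩) :=
    instIsProbabilityMeasureGaussianReal μstar ⟨σ ^ 2, sq_nonneg σ⟩
  have hmpos : (0:ℝ) < (m:ℝ) := by exact_mod_cast Nat.lt_of_lt_of_le Nat.zero_lt_one hm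
  have hm0 : ((m:ℝ)) ≠ 0 := ne_of_gt hmpos
  have hlam1 : (1:ℝ) + lam ≠ 0 := by positivity
  have hb2 : lam / (1 + lam) = β := by rw [hβ]; ring_nf
  have hb1 : (1:ℝ) / (1 + lam) = 1 - β := by
    rw [hβ]; field_simp; ring
  set C : ℝ := Real.log (√(2 * π * σ ^ 2)) + 1 / 2 with hCdef
  have hsqrt_pos : (0:ℝ) < √(2 * π * σ ^ 2) := by
    apply Real.sqrt_pos.mpr; positivity
  -- closed form of the risk
  have hC : ∀ a : ℝ, R a = C + (a - μstar) ^ 2 / (2 * σ ^ 2) := by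
    intro a
    rw [hR a]
    have hlog : ∀ x : ℝ, -Real.log (gaussianPDFReal a ⟨σ ^ 2, sq_nonneg σ⟩ x)
        = Real.log (√(2 * π * σ ^ 2)) + (x - a) ^ 2 / (2 * σ ^ 2) := by
      intro x
      rw [Stmt9Aux.gaussianPDFReal_eq a hσ, Real.log_mul (by positivity) (Real.exp_ne_zero _),
        Real.log_inv, Real.log_exp]
      ring
    simp only [hlog]
    have hexpand : ∀ x : ℝ, Real.log (√(2 * π * σ ^ 2)) + (x - a) ^ 2 / (2 * σ ^ 2)
        = (Real.log (√(2 * π * σ ^ 2)) + (a - μstar) ^ 2 / (2 * σ ^ 2))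
          + ((μstar - a) / σ ^ 2) * (x - μstar) + (1 / (2 * σ ^ 2)) * (x - μstar) ^ 2 := by
      intro x; field_simp; ring
    simp only [hexpand]
    have i0 : Integrable (fun _ : ℝ => Real.log (√(2 * π * σ ^ 2)) + (a - μstar) ^ 2 / (2 * σ ^ 2))
        (gaussianReal μstar ⟨σ ^ 2, sq_nonneg σ⟩) := integrable_const _
    have i1 : Integrable (fun x : ℝ => (μstar - a) / σ ^ 2 * (x - μstar))
        (gaussianReal μstar ⟨σ ^ 2, sq_nonneg σ⟩) :=
      (Stmt9Aux.gauss_m1_int μstar hσ).const_mul _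
    have i2 : Integrable (fun x : ℝ => 1 / (2 * σ ^ 2) * (x - μstar) ^ 2)
        (gaussianReal μstar ⟨σ ^ 2, sq_nonneg σ⟩) :=
      (Stmt9Aux.gauss_m2_int μstar hσ).const_mul _
    have i01 : Integrable (fun x : ℝ => Real.log (√(2 * π * σ ^ 2))
        + (a - μstar) ^ 2 / (2 * σ ^ 2) + (μstar - a) / σ ^ 2 * (x - μstar))
        (gaussianReal μstar ⟨σ ^ 2, sq_nonneg σ⟩) := i0.add i1
    rw [integral_add i01 i2, integral_add i0 i1,
      integral_const, integral_const_mul, integral_const_mul,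
      Stmt9Aux.gauss_m1 μstar hσ, Stmt9Aux.gauss_m2 μstar hσ]
    simp only [measure_univ, probReal_univ, ENNReal.toReal_one, one_smul, mul_zero, add_zero]
    rw [hCdef]
    field_simp
    try ring
  -- moments of the centered sum under P
  obtain ⟨pint1, pint2, pz, psq⟩ :=
    Stmt9Aux.pi_sum_moments (m := m) (gaussianReal μstar ⟨σ ^ 2, sq_nonneg σ⟩)
      (fun y => y - μstar) (Stmt9Aux.gauss_m1_int μstar hσ)
      (Stmt9Aux.gauss_m2_int μstar hσ) (Stmt9Aux.gauss_m1 μstar hσ)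
  rw [Stmt9Aux.gauss_m2 μstar hσ] at psq
  subst hP
  -- generic linear-quadratic integral
  have lin : ∀ K0 K1 K2 : ℝ,
      ∫ s : Fin m → ℝ, (K0 + K1 * (∑ i, (s i - μstar)) + K2 * (∑ i, (s i - μstar)) ^ 2)
        ∂(Measure.pi fun _ : Fin m => gaussianReal μstar ⟨σ ^ 2, sq_nonneg σ⟩)
        = K0 + K2 * ((m:ℝ) * σ ^ 2) := by
    intro K0 K1 K2
    have j0 : Integrable (fun _ : Fin m → ℝ => K0)
        (Measure.pi fun _ : Fin m => gaussianReal μstar ⟨σ ^ 2, sq_nonneg σ⟩) := integrable_const _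
    have j1 : Integrable (fun s : Fin m → ℝ => K1 * ∑ i, (s i - μstar))
        (Measure.pi fun _ : Fin m => gaussianReal μstar ⟨σ ^ 2, sq_nonneg σ⟩) :=
      pint1.const_mul K1
    have j2 : Integrable (fun s : Fin m → ℝ => K2 * (∑ i, (s i - μstar)) ^ 2)
        (Measure.pi fun _ : Fin m => gaussianReal μstar ⟨σ ^ 2, sq_nonneg σ⟩) :=
      pint2.const_mul K2
    have j01 : Integrable (fun s : Fin m → ℝ => K0 + K1 * ∑ i, (s i - μstar))
        (Measure.pi fun _ : Fin m => gaussianReal μstar ⟨σ ^ 2, sq_nonneg σ⟩) := j0.add j1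
    rw [integral_add j01 j2, integral_add j0 j1,
      integral_const, integral_const_mul, integral_const_mul, pz, psq]
    simp [measure_univ]
  have hsum : ∀ s : Fin m → ℝ, ∑ i, s i = (∑ i, (s i - μstar)) + (m:ℝ) * μstar := by
    intro s
    rw [Finset.sum_sub_distrib]
    simp
  have hpre : μPRE = μstar + d := by rw [hd]; ring
  -- the three expected risks
  have hEmle : ∫ s, R (μMLE s) ∂(Measure.pi fun _ : Fin m => gaussianReal μstar ⟨σ ^ 2, sq_nonneg σ⟩)
      = C + (σ ^ 2 / m) / (2 * σ ^ 2) := by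
    have hfun : (fun s : Fin m → ℝ => R (μMLE s))
        = fun s => C + 0 * (∑ i, (s i - μstar))
            + (1 / ((m:ℝ) ^ 2 * (2 * σ ^ 2))) * (∑ i, (s i - μstar)) ^ 2 := by
      funext s
      rw [hC, hMLE s, hsum s]
      field_simp
      try ring
    rw [hfun, lin]
    field_simp
    try ring
  have hEreg : ∫ s, R (μREG s) ∂(Measure.pi fun _ : Fin m => gaussianReal μstar ⟨σ ^ 2, sq_nonneg σ⟩)
      = C + ((1 - β) ^ 2 * (σ ^ 2 / m) + β ^ 2 * d ^ 2) / (2 * σ ^ 2) := by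
    have hfun : (fun s : Fin m → ℝ => R (μREG s))
        = fun s => (C + (β * d) ^ 2 / (2 * σ ^ 2))
            + ((1 - β) * (β * d) / ((m:ℝ) * σ ^ 2)) * (∑ i, (s i - μstar))
            + ((1 - β) ^ 2 / ((m:ℝ) ^ 2 * (2 * σ ^ 2))) * (∑ i, (s i - μstar)) ^ 2 := by
      funext s
      rw [hC, hREG s, hMLE s, hb1, hb2, hpre, hsum s]
      field_simp
      try ring
    rw [hfun, lin]
    field_simp
    try ring
  have hEpre : R μPRE = C + d ^ 2 / (2 * σ ^ 2) := by
    rw [hC, hpre]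
    ring_nf
  -- inequalities on β
  have hβpos : 0 < β := lt_of_le_of_lt (le_max_right _ 0) hlow
  have hβlt1 : β < 1 := lt_of_lt_of_le hhigh (min_le_right _ _)
  have hden : (0:ℝ) < σ ^ 2 + (m:ℝ) * d ^ 2 := by positivity
  have h1 : σ ^ 2 - (m:ℝ) * d ^ 2 < β * (σ ^ 2 + (m:ℝ) * d ^ 2) := by
    have := lt_of_le_of_lt (le_max_left _ (0:ℝ)) hlow
    rwa [div_lt_iff₀ hden] at this
  have h2 : β * (σ ^ 2 + (m:ℝ) * d ^ 2) < 2 * σ ^ 2 := by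
    have := lt_of_lt_of_le hhigh (min_le_left _ _)
    rwa [lt_div_iff₀ hden] at this
  have keyA : (1 - β) ^ 2 * σ ^ 2 + β ^ 2 * ((m:ℝ) * d ^ 2) < σ ^ 2 := by
    nlinarith [mul_lt_mul_of_pos_left h2 hβpos]
  have keyB : (1 - β) ^ 2 * σ ^ 2 + β ^ 2 * ((m:ℝ) * d ^ 2) < (m:ℝ) * d ^ 2 := by
    nlinarith [mul_lt_mul_of_pos_left h1 (sub_pos.mpr hβlt1)]
  rw [hEreg, hEmle, hEpre, lt_min_iff]
  have h2σ : (0:ℝ) < 2 * σ ^ 2 := by positivity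
  have e : (1 - β) ^ 2 * (σ ^ 2 / m) + β ^ 2 * d ^ 2
      = ((1 - β) ^ 2 * σ ^ 2 + β ^ 2 * ((m:ℝ) * d ^ 2)) / m := by
    field_simp
  refine ⟨add_lt_add_right ((div_lt_div_iff_of_pos_right h2σ).mpr ?_) C,
    add_lt_add_right ((div_lt_div_iff_of_pos_right h2σ).mpr ?_) C⟩
  · rw [e]
    exact (div_lt_div_iff_of_pos_right hmpos).mpr keyA
  · rw [e]
    conv_rhs => rw [show d ^ 2 = ((m:ℝ) * d ^ 2) / (m:ℝ) from by field_simp]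
    exact (div_lt_div_iff_of_pos_right hmpos).mpr keyB
end

section
/- Let X be a compact metric space, let p_d be a Borel probability measure on X, let E_f : X → ℝ be continuous, and let λ > 0. Then the functional μ ↦ KL(p_d ‖ μ) + λ·∫_X E_f dμ, defined on the set of all Borel probability measures on X with values in [0, ∞], attains its infimum; i.e., there exists a Borel probability measure μ* on X minimizing the functional. -/
open MeasureTheory
open scoped Classical

open Real Filter
open scoped ENNReal

lemma abs_log_le {t : ℝ} (ht : 0 < t) : |Real.log t| ≤ t + t⁻¹ := by
  rcases le_total 1 t with h1 | h1
  · rw [abs_of_nonneg (Real.log_nonneg h1)]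
    have := Real.log_le_sub_one_of_pos ht
    have : Real.log t ≤ t := by linarith
    have : 0 ≤ t⁻¹ := inv_nonneg.2 ht.le
    linarith [Real.log_le_sub_one_of_pos ht]
  · rw [abs_of_nonpos (Real.log_nonpos ht.le h1)]
    have hinv : 0 < t⁻¹ := inv_pos.2 ht
    have := Real.log_le_sub_one_of_pos hinv
    rw [Real.log_inv] at this
    linarith

lemma gibbs {X : Type*} [MeasurableSpace X] {p μ : Measure X}
    [IsProbabilityMeasure p] [IsProbabilityMeasure μ]
    (hac : p ≪ μ) (hllr : Integrable (llr p μ) p)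
    {h : X → ℝ} (hmeas : Measurable h) (h0 : ∀ x, 0 ≤ h x)
    (hpos : ∀ᵐ x ∂p, 0 < h x)
    (hlogint : Integrable (fun x => Real.log (h x)) p)
    (hint : Integrable h μ) :
    ∫ x, Real.log (h x) ∂p + 1 ≤ ∫ x, llr p μ x ∂p + ∫ x, h x ∂μ := by
  set g : X → ℝ := fun x => (p.rnDeriv μ x).toReal with hg
  set φ : X → ℝ := fun x => Real.log (h x) - llr p μ x + 1 with hφ
  have hφint : Integrable φ p := ((hlogint.sub hllr).add (integrable_const 1)).congr (ae_of_all _ fun x => rfl)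
  have hgm : Measurable g := (Measure.measurable_rnDeriv p μ).ennreal_toReal
  have step1 : ∀ᵐ x ∂p, φ x ≤ h x / g x := by
    filter_upwards [hpos, Measure.rnDeriv_pos hac,
      hac.ae_le (Measure.rnDeriv_lt_top p μ)] with x hx hgx hgt
    have hgpos : 0 < g x := ENNReal.toReal_pos hgx.ne' hgt.ne
    have hlog : Real.log (h x / g x) ≤ h x / g x - 1 :=
      Real.log_le_sub_one_of_pos (div_pos hx hgpos)
    rw [Real.log_div hx.ne' hgpos.ne'] at hlog
    have : llr p μ x = Real.log (g x) := rfl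
    simp only [hφ, this]
    linarith
  have step2 : ENNReal.ofReal (∫ x, φ x ∂p) ≤ ∫⁻ x, ENNReal.ofReal (φ x) ∂p := by
    have hle : ∫ x, φ x ∂p ≤ ∫ x, max (φ x) 0 ∂p :=
      integral_mono hφint hφint.pos_part (fun x => le_max_left _ _)
    calc ENNReal.ofReal (∫ x, φ x ∂p) ≤ ENNReal.ofReal (∫ x, max (φ x) 0 ∂p) :=
          ENNReal.ofReal_le_ofReal hle
      _ = ∫⁻ x, ENNReal.ofReal (max (φ x) 0) ∂p :=
          ofReal_integral_eq_lintegral_ofReal hφint.pos_part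
            (Eventually.of_forall fun x => le_max_right _ _)
      _ = ∫⁻ x, ENNReal.ofReal (φ x) ∂p := by
          congr 1; funext x
          rcases le_total (φ x) 0 with hx | hx
          · rw [max_eq_right hx, ENNReal.ofReal_zero, ENNReal.ofReal_of_nonpos hx]
          · rw [max_eq_left hx]
  have step3 : ∫⁻ x, ENNReal.ofReal (φ x) ∂p ≤ ∫⁻ x, ENNReal.ofReal (h x / g x) ∂p :=
    lintegral_mono_ae (step1.mono fun x hx => ENNReal.ofReal_le_ofReal hx)
  have hq : AEMeasurable (fun x => ENNReal.ofReal (h x / g x)) μ :=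
    (ENNReal.measurable_ofReal.comp (hmeas.div hgm)).aemeasurable
  have step4 : ∫⁻ x, ENNReal.ofReal (h x / g x) ∂p
      = ∫⁻ x, p.rnDeriv μ x * ENNReal.ofReal (h x / g x) ∂μ :=
    (MeasureTheory.lintegral_rnDeriv_mul hac hq).symm
  have step5 : ∫⁻ x, p.rnDeriv μ x * ENNReal.ofReal (h x / g x) ∂μ
      ≤ ∫⁻ x, ENNReal.ofReal (h x) ∂μ := by
    apply lintegral_mono_ae
    filter_upwards [Measure.rnDeriv_lt_top p μ] with x hlt
    by_cases hzero : p.rnDeriv μ x = 0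
    · simp [hzero]
    · have hgpos : 0 < g x := ENNReal.toReal_pos hzero hlt.ne
      have hrd : p.rnDeriv μ x = ENNReal.ofReal (g x) :=
        (ENNReal.ofReal_toReal hlt.ne).symm
      rw [hrd, div_eq_mul_inv, ENNReal.ofReal_mul (h0 x), ← mul_assoc,
        mul_comm (ENNReal.ofReal (g x)), mul_assoc,
        ← ENNReal.ofReal_mul hgpos.le, mul_inv_cancel₀ hgpos.ne',
        ENNReal.ofReal_one, mul_one]
  have step6 : ∫⁻ x, ENNReal.ofReal (h x) ∂μ = ENNReal.ofReal (∫ x, h x ∂μ) :=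
    (ofReal_integral_eq_lintegral_ofReal hint (Eventually.of_forall h0)).symm
  have final : ∫ x, φ x ∂p ≤ ∫ x, h x ∂μ := by
    have := ((step2.trans step3).trans_eq step4).trans (step5.trans_eq step6)
    exact (ENNReal.ofReal_le_ofReal_iff (integral_nonneg h0)).1 this
  have hsplit : ∫ x, φ x ∂p = ∫ x, Real.log (h x) ∂p - ∫ x, llr p μ x ∂p + 1 := by
    have h1 : Integrable (fun x => Real.log (h x) - llr p μ x) p := hlogint.sub hllr
    calc ∫ x, φ x ∂p = ∫ x, (Real.log (h x) - llr p μ x) + 1 ∂p := rfl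
      _ = (∫ x, Real.log (h x) - llr p μ x ∂p) + ∫ _x, (1:ℝ) ∂p :=
          integral_add h1 (integrable_const 1)
      _ = ∫ x, Real.log (h x) ∂p - ∫ x, llr p μ x ∂p + 1 := by
          rw [integral_sub hlogint hllr, integral_const]; simp
  linarith [final, hsplit.symm.trans_le final]

lemma key {X : Type*} [MetricSpace X] [CompactSpace X] [MeasurableSpace X] [BorelSpace X]
    (pd : Measure X) [IsProbabilityMeasure pd] (h : X → ℝ) (hcont : Continuous h)
    (h0 : ∀ x, 0 ≤ h x) (hpos : ∀ᵐ x ∂pd, 0 < h x)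
    (x0 : X) (Z : ℝ≥0∞) (hZ : ∫⁻ x, ENNReal.ofReal (h x)⁻¹ ∂pd = Z) (hZ1 : Z ≤ 1)
    (hx0 : (1 - Z) * ENNReal.ofReal (h x0) = 0) :
    ∃ μstar : Measure X, IsProbabilityMeasure μstar ∧ pd ≪ μstar ∧
      Integrable (llr pd μstar) pd ∧
      ∫ x, llr pd μstar x ∂pd + ∫ x, h x ∂μstar = ∫ x, Real.log (h x) ∂pd + 1 ∧
      Integrable (fun x => Real.log (h x)) pd := by
  have hmeas : Measurable h := hcont.measurable
  have hinv_meas : Measurable fun x => ENNReal.ofReal (h x)⁻¹ :=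
    ENNReal.measurable_ofReal.comp hmeas.inv
  have hf_meas : Measurable fun x => ENNReal.ofReal (h x) :=
    ENNReal.measurable_ofReal.comp hmeas
  set μ1 : Measure X := pd.withDensity (fun x => ENNReal.ofReal (h x)⁻¹) with hμ1
  set μstar : Measure X := μ1 + (1 - Z) • Measure.dirac x0 with hμstar
  have hμ1univ : μ1 Set.univ = Z := by
    rw [hμ1, withDensity_apply _ MeasurableSet.univ, setLIntegral_univ, hZ]
  have hZne : Z ≠ ∞ := (hZ1.trans_lt ENNReal.one_lt_top).ne
  have hprob : IsProbabilityMeasure μstar := by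
    constructor
    rw [hμstar, Measure.add_apply, hμ1univ, Measure.smul_apply, Measure.dirac_apply_of_mem
      (Set.mem_univ x0), smul_eq_mul, mul_one, add_comm, tsub_add_cancel_of_le hZ1]
  have hμ1fin : IsFiniteMeasure μ1 := ⟨by rw [hμ1univ]; exact hZ1.trans_lt ENNReal.one_lt_top⟩
  -- μstar.withDensity h = pd
  have hpd : μstar.withDensity (fun x => ENNReal.ofReal (h x)) = pd := by
    rw [hμstar, withDensity_add_measure, withDensity_smul_measure]
    have e1 : μ1.withDensity (fun x => ENNReal.ofReal (h x)) = pd := by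
      rw [hμ1, ← withDensity_mul pd hinv_meas hf_meas]
      have : ((fun x => ENNReal.ofReal (h x)⁻¹) * fun x => ENNReal.ofReal (h x)) =ᵐ[pd]
          (fun _ => (1 : ℝ≥0∞)) := by
        filter_upwards [hpos] with x hx
        rw [Pi.mul_apply, ← ENNReal.ofReal_mul (inv_nonneg.2 hx.le), inv_mul_cancel₀ hx.ne',
          ENNReal.ofReal_one]
      rw [withDensity_congr_ae this]; exact withDensity_one
    have e2 : (Measure.dirac x0).withDensity (fun x => ENNReal.ofReal (h x))
        = ENNReal.ofReal (h x0) • Measure.dirac x0 := by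
      classical
      ext s hs
      rw [withDensity_apply _ hs, setLIntegral_dirac' hf_meas hs, Measure.smul_apply,
        Measure.dirac_apply' _ hs, smul_eq_mul]
      by_cases hx : x0 ∈ s <;> simp [hx]
    rw [e1, e2, smul_smul, hx0, zero_smul, add_zero]
  have hacs : pd ≪ μstar := by
    rw [← hpd]; exact withDensity_absolutelyContinuous μstar _
  have hrn : pd.rnDeriv μstar =ᵐ[pd] fun x => ENNReal.ofReal (h x) := by
    have h1 := Measure.rnDeriv_withDensity μstar hf_meas
    rw [hpd] at h1
    exact hacs.ae_le h1
  have hllr_eq : llr pd μstar =ᵐ[pd] fun x => Real.log (h x) := by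
    filter_upwards [hrn] with x hx
    rw [llr, hx, ENNReal.toReal_ofReal (h0 x)]
  -- integrability of log h
  have hinv_int : Integrable (fun x => (h x)⁻¹) pd := by
    refine ⟨hmeas.inv.aestronglyMeasurable, ?_⟩
    rw [hasFiniteIntegral_iff_norm]
    have : ∀ x, ENNReal.ofReal ‖(h x)⁻¹‖ = ENNReal.ofReal (h x)⁻¹ := fun x => by
      rw [Real.norm_eq_abs, abs_of_nonneg (inv_nonneg.2 (h0 x))]
    simp_rw [this, hZ]
    exact hZ1.trans_lt ENNReal.one_lt_top
  have hh_int : Integrable h pd :=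
    hcont.integrable_of_hasCompactSupport (HasCompactSupport.of_compactSpace h)
  have hlog_int : Integrable (fun x => Real.log (h x)) pd := by
    refine Integrable.mono' (hh_int.add hinv_int)
      (Real.measurable_log.comp hmeas).aestronglyMeasurable ?_
    filter_upwards [hpos] with x hx
    simpa using abs_log_le hx
  have hllr_int : Integrable (llr pd μstar) pd := hlog_int.congr hllr_eq.symm
  -- ∫ h ∂μstar = 1
  have hsmulfin : IsFiniteMeasure ((1 - Z) • Measure.dirac x0 : Measure X) := by
    constructor
    rw [Measure.smul_apply, smul_eq_mul, Measure.dirac_apply_of_mem (Set.mem_univ x0), mul_one]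
    exact (tsub_le_self.trans_lt ENNReal.one_lt_top)
  have hint1 : Integrable h μ1 :=
    hcont.integrable_of_hasCompactSupport (HasCompactSupport.of_compactSpace h)
  have hint2 : Integrable h ((1 - Z) • Measure.dirac x0 : Measure X) :=
    hcont.integrable_of_hasCompactSupport (HasCompactSupport.of_compactSpace h)
  have hIμ1 : ∫ x, h x ∂μ1 = 1 := by
    have hnn : Measurable fun x => Real.toNNReal (h x)⁻¹ := hmeas.inv.real_toNNReal
    have : μ1 = pd.withDensity (fun x => (Real.toNNReal (h x)⁻¹ : ℝ≥0∞)) := rfl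
    rw [this, integral_withDensity_eq_integral_smul hnn]
    have : (fun x => Real.toNNReal (h x)⁻¹ • h x) =ᵐ[pd] fun _ => (1:ℝ) := by
      filter_upwards [hpos] with x hx
      rw [NNReal.smul_def, Real.coe_toNNReal _ (inv_nonneg.2 hx.le), smul_eq_mul,
        inv_mul_cancel₀ hx.ne']
    rw [integral_congr_ae this, integral_const]
    simp
  have hIμ2 : ∫ x, h x ∂((1 - Z) • Measure.dirac x0 : Measure X) = 0 := by
    rw [integral_smul_measure, integral_dirac, smul_eq_mul]
    rcases mul_eq_zero.1 hx0 with h1 | h1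
    · rw [h1]; simp
    · have : h x0 = 0 := le_antisymm (by simpa using (ENNReal.ofReal_eq_zero.1 h1)) (h0 x0)
      rw [this, mul_zero]
  have hIh : ∫ x, h x ∂μstar = 1 := by
    rw [hμstar, integral_add_measure hint1 hint2, hIμ1, hIμ2, add_zero]
  refine ⟨μstar, hprob, hacs, hllr_int, ?_, hlog_int⟩
  rw [hIh, integral_congr_ae hllr_eq]

lemma choose_h {X : Type*} [MetricSpace X] [CompactSpace X] [MeasurableSpace X] [BorelSpace X]
    (pd : Measure X) [IsProbabilityMeasure pd] (Ef : X → ℝ) (hEf : Continuous Ef)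
    (lam : ℝ) (hlam : 0 < lam) :
    ∃ (c : ℝ) (x0 : X) (Z : ℝ≥0∞),
      (∀ x, 0 ≤ lam * Ef x + c) ∧ (∀ᵐ x ∂pd, 0 < lam * Ef x + c) ∧
      (∫⁻ x, ENNReal.ofReal (lam * Ef x + c)⁻¹ ∂pd = Z) ∧ Z ≤ 1 ∧
      (1 - Z) * ENNReal.ofReal (lam * Ef x0 + c) = 0 := by
  have hne : Nonempty X := by
    by_contra hX
    rw [not_nonempty_iff] at hX
    have h1 : pd Set.univ = 1 := measure_univ
    rw [Set.univ_eq_empty_iff.2 hX, measure_empty] at h1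
    exact zero_ne_one h1
  obtain ⟨x0, -, hx0min⟩ := isCompact_univ.exists_isMinOn Set.univ_nonempty
    hEf.continuousOn
  have hx0min : ∀ x, Ef x0 ≤ Ef x := fun x => hx0min (Set.mem_univ x)
  set c0 : ℝ := -(lam * Ef x0) with hc0
  set W : ℝ → ℝ≥0∞ := fun c => ∫⁻ x, ENNReal.ofReal (lam * Ef x + c)⁻¹ ∂pd with hW
  have hmeasc : ∀ c : ℝ, Measurable fun x => (lam * Ef x + c)⁻¹ := fun c =>
    (((continuous_const.mul hEf).add continuous_const).measurable).inv
  have hlb : ∀ (c : ℝ) (x : X), c - c0 ≤ lam * Ef x + c := by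
    intro c x
    have := mul_le_mul_of_nonneg_left (hx0min x) hlam.le
    simp only [hc0]; linarith
  have hcontc : ∀ c : ℝ, Continuous fun x => lam * Ef x + c := fun c =>
    (continuous_const.mul hEf).add continuous_const
  have hintc : ∀ c : ℝ, c0 < c → Integrable (fun x => (lam * Ef x + c)⁻¹) pd := by
    intro c hc
    refine Continuous.integrable_of_hasCompactSupport ?_ (HasCompactSupport.of_compactSpace _)
    exact (hcontc c).inv₀ fun x => by have := hlb c x; intro hcon; rw [hcon] at this; linarith
  by_cases hcase : ∃ c1, c0 < c1 ∧ 1 ≤ W c1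
  · -- Case A: exact solution W c = 1 by IVT
    obtain ⟨c1, hc1, hWc1⟩ := hcase
    set c2 : ℝ := c1 + 2 with hc2
    set clamp : ℝ → ℝ := fun c => max c1 (min c c2) with hclamp
    have hclamp_cont : Continuous clamp :=
      continuous_const.max (continuous_id.min continuous_const)
    have hclamp_ge : ∀ c, c1 ≤ clamp c := fun c => le_max_left _ _
    have hclamp_mem : ∀ c ∈ Set.Icc c1 c2, clamp c = c := by
      intro c hc
      rw [hclamp]; simp only
      rw [min_eq_left hc.2, max_eq_right hc.1]
    have hkpos : ∀ (c : ℝ) (x : X), 0 < c1 - c0 ∧ c1 - c0 ≤ lam * Ef x + clamp c := by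
      intro c x
      refine ⟨by linarith, ?_⟩
      have := hlb (clamp c) x
      have := hclamp_ge c
      linarith
    set φ : ℝ → ℝ := fun c => ∫ x, (lam * Ef x + clamp c)⁻¹ ∂pd with hφ
    have hφcont : Continuous φ := by
      apply continuous_of_dominated (bound := fun _ => (c1 - c0)⁻¹)
      · intro c
        exact ((((continuous_const.mul hEf).add continuous_const).measurable).inv).aestronglyMeasurable
      · intro c
        refine ae_of_all _ fun x => ?_
        obtain ⟨hp, hl⟩ := hkpos c x
        rw [Real.norm_eq_abs, abs_of_nonneg (inv_nonneg.2 (by linarith))]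
        exact inv_anti₀ hp hl
      · exact integrable_const _
      · refine ae_of_all _ fun x => ?_
        refine (continuous_const.add (hclamp_cont)).inv₀ fun c => ?_
        obtain ⟨hp, hl⟩ := hkpos c x
        intro hcon; change lam * Ef x + clamp c = 0 at hcon; rw [hcon] at hl; linarith
    have hWφ : ∀ c ∈ Set.Icc c1 c2, W c = ENNReal.ofReal (φ c) := by
      intro c hc
      have h1 : c0 < c := lt_of_lt_of_le hc1 hc.1
      rw [hφ]; simp only
      rw [hclamp_mem c hc]
      rw [ofReal_integral_eq_lintegral_ofReal (hintc c h1)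
        (ae_of_all _ fun x => inv_nonneg.2 (by have := hlb c x; linarith))]
    have hφ1 : 1 ≤ φ c1 := by
      have := hWφ c1 ⟨le_refl _, by linarith⟩
      rw [this] at hWc1
      exact ENNReal.one_le_ofReal.1 hWc1
    have hφ2 : φ c2 ≤ 2⁻¹ := by
      have hmem : c2 ∈ Set.Icc c1 c2 := ⟨by linarith, le_refl _⟩
      rw [hφ]; simp only [hclamp_mem c2 hmem]
      have hle : ∀ x, (lam * Ef x + c2)⁻¹ ≤ 2⁻¹ := by
        intro x
        have := hlb c2 x
        refine inv_anti₀ (by norm_num) (by simp only [hc2] at this ⊢; linarith)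
      calc ∫ x, (lam * Ef x + c2)⁻¹ ∂pd ≤ ∫ _x, (2:ℝ)⁻¹ ∂pd :=
            integral_mono (hintc c2 (by simp only [hc2]; linarith)) (integrable_const _) hle
        _ = 2⁻¹ := by rw [integral_const]; simp
    obtain ⟨c, hcmem, hceq⟩ := intermediate_value_Icc' (by linarith : c1 ≤ c2)
      hφcont.continuousOn (Set.mem_Icc.2 ⟨by linarith, hφ1⟩)
    have hcc0 : c0 < c := lt_of_lt_of_le hc1 hcmem.1
    refine ⟨c, x0, 1, ?_, ?_, ?_, le_refl _, by simp⟩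
    · intro x; have := hlb c x; linarith
    · exact ae_of_all _ fun x => by have := hlb c x; linarith
    · rw [show (∫⁻ x, ENNReal.ofReal (lam * Ef x + c)⁻¹ ∂pd) = W c from rfl,
        hWφ c hcmem, hceq, ENNReal.ofReal_one]
  · -- Case B: boundary solution
    push_neg at hcase
    have hnull : pd {x | lam * Ef x + c0 = 0} = 0 := by
        by_contra hS
        set S := {x | lam * Ef x + c0 = 0} with hSdef
        have hSmeas : MeasurableSet S :=
          (isClosed_eq (hcontc c0) continuous_const).measurableSet
        have hSpos : 0 < pd S := pos_iff_ne_zero.2 hS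
        have hSfin : pd S ≠ ∞ := (measure_lt_top pd S).ne
        set r : ℝ := (pd S).toReal with hr
        have hrpos : 0 < r := ENNReal.toReal_pos hS hSfin
        have hofr : ENNReal.ofReal r = pd S := ENNReal.ofReal_toReal hSfin
        have hWge : 1 ≤ W (c0 + r) := by
          have h1 : ∫⁻ x in S, ENNReal.ofReal (lam * Ef x + (c0 + r))⁻¹ ∂pd ≤ W (c0 + r) :=
            setLIntegral_le_lintegral _ _
          have h2 : ∫⁻ x in S, ENNReal.ofReal (lam * Ef x + (c0 + r))⁻¹ ∂pd
              = ENNReal.ofReal r⁻¹ * pd S := by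
            rw [setLIntegral_congr_fun hSmeas (fun x hx => ?_)]
            · exact setLIntegral_const _ _
            · have hx' : lam * Ef x + c0 = 0 := hx
              rw [show lam * Ef x + (c0 + r) = r by linarith]
          rw [h2, ← hofr, ← ENNReal.ofReal_mul (inv_nonneg.2 hrpos.le),
            inv_mul_cancel₀ hrpos.ne', ENNReal.ofReal_one] at h1
          exact h1
        exact absurd hWge (not_le.2 (hcase (c0 + r) (by linarith)))
    have hposae : ∀ᵐ x ∂pd, 0 < lam * Ef x + c0 := by
      rw [ae_iff]
      convert hnull using 2
      ext x
      simp only [Set.mem_setOf_eq, not_lt]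
      constructor
      · intro hx; have := hlb c0 x; linarith
      · intro hx; linarith [hx.le]
    refine ⟨c0, x0, W c0, ?_, hposae, rfl, ?_, ?_⟩
    · intro x; have := hlb c0 x; linarith
    · -- W c0 ≤ 1 by Fatou
      set f : ℕ → X → ℝ≥0∞ := fun n x =>
        ENNReal.ofReal (lam * Ef x + (c0 + (1 / (n + 1))))⁻¹ with hf
      have hfmeas : ∀ n, Measurable (f n) := fun n =>
        ENNReal.measurable_ofReal.comp (hmeasc _)
      have hfle : ∀ n, ∫⁻ x, f n x ∂pd ≤ 1 := by
        intro n
        have hpos' : (0:ℝ) < 1 / (n + 1) := by positivity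
        exact (hcase (c0 + 1 / (n + 1)) (by linarith)).le
      -- pointwise liminf
      have hgoal : W c0 ≤ 1 := by
        have h1 : W c0 ≤ ∫⁻ x, liminf (fun n => f n x) atTop ∂pd := by
          rw [hW]
          refine lintegral_mono_ae ?_
          filter_upwards [hposae] with x hx
          have htend : Tendsto (fun n : ℕ => f n x) atTop
              (nhds (ENNReal.ofReal (lam * Ef x + c0)⁻¹)) := by
            have h2 : Tendsto (fun n : ℕ => (lam * Ef x + (c0 + 1 / (n + 1)))⁻¹) atTop
                (nhds (lam * Ef x + c0)⁻¹) := by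
              have := tendsto_one_div_add_atTop_nhds_zero_nat (𝕜 := ℝ)
              have h3 : Tendsto (fun n : ℕ => lam * Ef x + (c0 + 1 / (n + 1))) atTop
                  (nhds (lam * Ef x + (c0 + 0))) :=
                tendsto_const_nhds.add (tendsto_const_nhds.add this)
              rw [add_zero] at h3
              exact h3.inv₀ hx.ne'
            exact (ENNReal.continuous_ofReal.tendsto _).comp h2
          rw [htend.liminf_eq]
        have h2 : ∫⁻ x, liminf (fun n => f n x) atTop ∂pd ≤ liminf (fun n => ∫⁻ x, f n x ∂pd) atTop :=
          lintegral_liminf_le hfmeas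
        have h3 : liminf (fun n => ∫⁻ x, f n x ∂pd) atTop ≤ 1 := by
          refine liminf_le_of_le (by isBoundedDefault) ?_
          intro b hb
          obtain ⟨n, hn⟩ := hb.exists
          exact hn.trans (hfle n)
        exact (h1.trans h2).trans h3
      exact hgoal
    · -- boundary: h x0 = 0
      have : lam * Ef x0 + c0 = 0 := by rw [hc0]; ring
      rw [this, ENNReal.ofReal_zero, mul_zero]

/-- The Kullback–Leibler divergence `KL(p ‖ q)`, equal to `∫ log(dp/dq) dp`
when `p ≪ q` (and this log-likelihood ratio is integrable), and `+∞`
otherwise. -/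
noncomputable def klDiv {α : Type*} [MeasurableSpace α] (p q : Measure α) : EReal :=
  if p ≪ q ∧ Integrable (llr p q) p then ((∫ x, llr p q x ∂p : ℝ) : EReal) else ⊤

/-- Existence of a minimizer of the non-parametric Reg-DGM objective:
on a compact metric space `X`, the functional
`μ ↦ KL(p_d ‖ μ) + λ·∫_X E_f dμ` over Borel probability measures on `X`
attains its infimum. -/
theorem stmt_13 (X : Type*) [MetricSpace X] [CompactSpace X]
    [MeasurableSpace X] [BorelSpace X]
    (pd : Measure X) [IsProbabilityMeasure pd]
    (Ef : X → ℝ) (hEf : Continuous Ef)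
    (lam : ℝ) (hlam : 0 < lam)
    (F : Measure X → EReal)
    (hF : ∀ μ : Measure X,
      F μ = klDiv pd μ + ((lam * ∫ x, Ef x ∂μ : ℝ) : EReal)) :
    ∃ μstar : Measure X, IsProbabilityMeasure μstar ∧
      ∀ μ : Measure X, IsProbabilityMeasure μ → F μstar ≤ F μ := by
  obtain ⟨c, x0, Z, h0, hpos, hZ, hZ1, hx0⟩ := choose_h pd Ef hEf lam hlam
  set h : X → ℝ := fun x => lam * Ef x + c with hh
  have hcont : Continuous h := (continuous_const.mul hEf).add continuous_const
  obtain ⟨μstar, hprob, hacs, hllr_int, hkey, hlog_int⟩ :=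
    key pd h hcont h0 hpos x0 Z hZ hZ1 hx0
  refine ⟨μstar, hprob, ?_⟩
  have hlin : ∀ μ : Measure X, IsProbabilityMeasure μ →
      ∫ x, h x ∂μ = lam * ∫ x, Ef x ∂μ + c := by
    intro μ hμ
    have hEfint : Integrable Ef μ :=
      hEf.integrable_of_hasCompactSupport (HasCompactSupport.of_compactSpace Ef)
    rw [hh]
    simp only
    rw [integral_add (hEfint.const_mul lam) (integrable_const c), integral_const,
      MeasureTheory.integral_const_mul]
    simp
  intro μ hμ
  rw [hF μstar, hF μ]
  have hkl1 : klDiv pd μstar = ((∫ x, llr pd μstar x ∂pd : ℝ) : EReal) := by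
    rw [klDiv, if_pos ⟨hacs, hllr_int⟩]
  by_cases hklμ : pd ≪ μ ∧ Integrable (llr pd μ) pd
  · have hkl2 : klDiv pd μ = ((∫ x, llr pd μ x ∂pd : ℝ) : EReal) := by
      rw [klDiv, if_pos hklμ]
    rw [hkl1, hkl2, ← EReal.coe_add, ← EReal.coe_add, EReal.coe_le_coe_iff]
    have hinth : Integrable h μ :=
      hcont.integrable_of_hasCompactSupport (HasCompactSupport.of_compactSpace h)
    have hg := gibbs hklμ.1 hklμ.2 hcont.measurable h0 hpos hlog_int hinth
    have e1 := hlin μstar hprob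
    have e2 := hlin μ hμ
    linarith
  · rw [hkl1, klDiv]
    split_ifs
    rw [EReal.top_add_coe]
    exact le_top
end

section
/- Let X ⊆ ℝⁿ be a nonempty compact set, let p_d be a bounded probability density on X, and let E_f : X → ℝ be continuous and bounded, with M = sup_{x∈X} E_f(x) and m₀ = inf_{x∈X} E_f(x). Suppose for each λ > 0 there exists α_λ ∈ ℝ such that p_λ(x) = p_d(x)/(α_λ + λ·E_f(x)) is a probability density on X (in particular α_λ + λ·E_f(x) > 0 on the support of p_d and ∫_X p_λ = 1). Then 1 − λ·M ≤ α_λ ≤ 1 − λ·m₀ for every such λ; consequently α_λ → 1 as λ → 0⁺, and ∫_X |p_λ(x) − p_d(x)| dx → 0 as λ → 0⁺. -/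
open MeasureTheory Filter

/-- Consistency of the non-parametric Reg-DGM solution as `λ → 0⁺`: if for each
`λ > 0` the reweighted density `p_λ(x) = p_d(x)/(α_λ + λ·E_f(x))` is a
probability density on the compact set `X` (denominator positive on the support
of `p_d` and `∫_X p_λ = 1`), then `1 − λ·M ≤ α_λ ≤ 1 − λ·m₀` where
`M = sup_X E_f` and `m₀ = inf_X E_f`; consequently `α_λ → 1` and
`∫_X |p_λ − p_d| → 0` as `λ → 0⁺`. -/
theorem stmt_14 (n : ℕ) (X : Set (Fin n → ℝ))
    (hXne : X.Nonempty) (hXc : IsCompact X) (hXmeas : MeasurableSet X)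
    (pd : (Fin n → ℝ) → ℝ) (hpd_meas : Measurable pd)
    (hpd_nonneg : ∀ x, 0 ≤ pd x) (hpd_int : ∫ x in X, pd x = 1)
    (hpd_bdd : ∃ C : ℝ, ∀ x ∈ X, pd x ≤ C)
    (Ef : (Fin n → ℝ) → ℝ) (hEf_cont : ContinuousOn Ef X)
    (M m₀ : ℝ) (hM : M = sSup (Ef '' X)) (hm₀ : m₀ = sInf (Ef '' X))
    (α : ℝ → ℝ)
    (hpos : ∀ lam : ℝ, 0 < lam →
      ∀ x ∈ X, pd x ≠ 0 → 0 < α lam + lam * Ef x)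
    (hnorm : ∀ lam : ℝ, 0 < lam →
      ∫ x in X, pd x / (α lam + lam * Ef x) = 1) :
    (∀ lam : ℝ, 0 < lam →
      1 - lam * M ≤ α lam ∧ α lam ≤ 1 - lam * m₀) ∧
    Tendsto α (nhdsWithin 0 (Set.Ioi 0)) (nhds 1) ∧
    Tendsto (fun lam : ℝ =>
        ∫ x in X, |pd x / (α lam + lam * Ef x) - pd x|)
      (nhdsWithin 0 (Set.Ioi 0)) (nhds 0) := by
  have hcpt : IsCompact (Ef '' X) := hXc.image_of_continuousOn hEf_cont
  have hEfM : ∀ x ∈ X, Ef x ≤ M := fun x hx => hM ▸ le_csSup hcpt.bddAbove ⟨x, hx, rfl⟩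
  have hEfm : ∀ x ∈ X, m₀ ≤ Ef x := fun x hx => hm₀ ▸ csInf_le hcpt.bddBelow ⟨x, hx, rfl⟩
  have hmM : m₀ ≤ M := by
    obtain ⟨x, hx⟩ := hXne; exact (hEfm x hx).trans (hEfM x hx)
  have hpd_intg : IntegrableOn pd X := by
    by_contra h
    rw [integral_undef h] at hpd_int
    exact zero_ne_one hpd_int
  have hex : ∃ x ∈ X, pd x ≠ 0 := by
    by_contra h
    push_neg at h
    have : ∫ x in X, pd x = 0 :=
      setIntegral_eq_zero_of_forall_eq_zero h
    rw [this] at hpd_int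
    exact zero_ne_one hpd_int
  have hIntlam : ∀ lam : ℝ, 0 < lam →
      IntegrableOn (fun x => pd x / (α lam + lam * Ef x)) X := by
    intro lam hlam
    by_contra h
    have h1 := hnorm lam hlam
    rw [integral_undef h] at h1
    exact zero_ne_one h1
  have hbounds : ∀ lam : ℝ, 0 < lam →
      1 - lam * M ≤ α lam ∧ α lam ≤ 1 - lam * m₀ := by
    intro lam hlam
    obtain ⟨x₀, hx₀, hpd₀⟩ := hex
    have hden₀ : 0 < α lam + lam * Ef x₀ := hpos lam hlam x₀ hx₀ hpd₀
    have hMpos : 0 < α lam + lam * M := by nlinarith [hEfM x₀ hx₀]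
    have hle : ∫ x in X, pd x / (α lam + lam * M) ≤
        ∫ x in X, pd x / (α lam + lam * Ef x) := by
      apply setIntegral_mono_on (hpd_intg.div_const _) (hIntlam lam hlam) hXmeas
      intro x hx
      rcases eq_or_ne (pd x) 0 with h0 | h0
      · simp [h0]
      · have hden : 0 < α lam + lam * Ef x := hpos lam hlam x hx h0
        gcongr
        · exact hpd_nonneg x
        · nlinarith [hEfM x hx]
    rw [integral_div, hpd_int, hnorm lam hlam] at hle
    have hup : 1 ≤ α lam + lam * M := (div_le_one hMpos).mp hle
    constructor
    · linarith
    · rcases le_or_gt (α lam + lam * m₀) 0 with hc | hc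
      · linarith
      · have hle2 : ∫ x in X, pd x / (α lam + lam * Ef x) ≤
            ∫ x in X, pd x / (α lam + lam * m₀) := by
          apply setIntegral_mono_on (hIntlam lam hlam) (hpd_intg.div_const _) hXmeas
          intro x hx
          rcases eq_or_ne (pd x) 0 with h0 | h0
          · simp [h0]
          · have hden : 0 < α lam + lam * Ef x := hpos lam hlam x hx h0
            gcongr
            · exact hpd_nonneg x
            · nlinarith [hEfm x hx]
        rw [integral_div, hpd_int, hnorm lam hlam] at hle2
        rw [le_div_iff₀ hc, one_mul] at hle2
        linarith
  refine ⟨hbounds, ?_, ?_⟩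
  · have hlow : Tendsto (fun lam : ℝ => 1 - lam * M) (nhdsWithin 0 (Set.Ioi 0)) (nhds 1) := by
      have h : Tendsto (fun lam : ℝ => 1 - lam * M) (nhds 0) (nhds (1 - 0 * M)) :=
        (tendsto_const_nhds.sub (tendsto_id.mul tendsto_const_nhds))
      simpa using h.mono_left nhdsWithin_le_nhds
    have hhigh : Tendsto (fun lam : ℝ => 1 - lam * m₀) (nhdsWithin 0 (Set.Ioi 0)) (nhds 1) := by
      have h : Tendsto (fun lam : ℝ => 1 - lam * m₀) (nhds 0) (nhds (1 - 0 * m₀)) :=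
        (tendsto_const_nhds.sub (tendsto_id.mul tendsto_const_nhds))
      simpa using h.mono_left nhdsWithin_le_nhds
    refine tendsto_of_tendsto_of_tendsto_of_le_of_le' hlow hhigh ?_ ?_
    · exact eventually_nhdsWithin_of_forall fun lam hlam => (hbounds lam hlam).1
    · exact eventually_nhdsWithin_of_forall fun lam hlam => (hbounds lam hlam).2
  · have hup : Tendsto (fun lam : ℝ => 2 * lam * (M - m₀))
        (nhdsWithin 0 (Set.Ioi 0)) (nhds 0) := by
      have h : Tendsto (fun lam : ℝ => 2 * lam * (M - m₀)) (nhds 0)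
          (nhds (2 * 0 * (M - m₀))) :=
        ((tendsto_const_nhds.mul tendsto_id).mul tendsto_const_nhds)
      simpa using h.mono_left nhdsWithin_le_nhds
    have hev : ∀ᶠ lam in nhdsWithin (0:ℝ) (Set.Ioi 0), lam * (M - m₀) < 1/2 := by
      have ht : Tendsto (fun lam : ℝ => lam * (M - m₀)) (nhdsWithin 0 (Set.Ioi 0)) (nhds 0) := by
        have h : Tendsto (fun lam : ℝ => lam * (M - m₀)) (nhds 0) (nhds (0 * (M - m₀))) :=
          (tendsto_id.mul tendsto_const_nhds)
        simpa using h.mono_left nhdsWithin_le_nhds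
      exact ht.eventually_lt_const (by norm_num)
    refine tendsto_of_tendsto_of_tendsto_of_le_of_le' tendsto_const_nhds hup ?_ ?_
    · exact Eventually.of_forall fun lam =>
        integral_nonneg fun x => abs_nonneg _
    · filter_upwards [hev, self_mem_nhdsWithin] with lam hhalf hlam
      have hlam' : (0:ℝ) < lam := hlam
      have hb := hbounds lam hlam'
      have ht0 : 0 ≤ lam * (M - m₀) := by nlinarith
      have key : ∀ x ∈ X, |pd x / (α lam + lam * Ef x) - pd x| ≤
          2 * lam * (M - m₀) * pd x := by
        intro x hx
        rcases eq_or_ne (pd x) 0 with h0 | h0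
        · simp [h0]
        · have hden : 0 < α lam + lam * Ef x := hpos lam hlam' x hx h0
          have h1 : α lam + lam * Ef x ≤ 1 + lam * (M - m₀) := by
            nlinarith [hEfM x hx]
          have h2 : 1 - lam * (M - m₀) ≤ α lam + lam * Ef x := by
            nlinarith [hEfm x hx]
          have hpdx : 0 ≤ pd x := hpd_nonneg x
          rw [abs_le]
          constructor
          · rw [neg_le, neg_sub, sub_le_iff_le_add, ← sub_le_iff_le_add',
              le_div_iff₀ hden]
            nlinarith [mul_nonneg hpdx ht0, mul_nonneg (mul_nonneg hpdx ht0) ht0]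
          · rw [sub_le_iff_le_add, div_le_iff₀ hden]
            nlinarith [mul_nonneg hpdx ht0, mul_nonneg (mul_nonneg hpdx ht0) ht0]
      calc ∫ x in X, |pd x / (α lam + lam * Ef x) - pd x|
          ≤ ∫ x in X, 2 * lam * (M - m₀) * pd x := by
            apply setIntegral_mono_on
              (((hIntlam lam hlam').sub hpd_intg).abs)
              (hpd_intg.const_mul _) hXmeas key
        _ = 2 * lam * (M - m₀) := by
            rw [integral_const_mul, hpd_int, mul_one]
end
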